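/- arXiv:1304.5001 — 3 statements merged into one kernel-verified Lean document; each statement's English description precedes it below -/
import Mathlib

section
/- Let n ≥ 3, let A = (a_{ij})_{1≤i,j≤n} be an n × n real array with σ_A² > 0, let π be a permutation of {1,…,n} chosen uniformly at random, and let Y = Σ_{i=1}^n a_{iπ(i)}. Then for all t ≥ 0, both P(Y − μ_A ≥ t) and P(Y − μ_A ≤ −t) are at most exp(−t² / (2(σ_A² + 8‖a‖ t))). -/
open MeasureTheory ProbabilityTheory Real

noncomputable instance (n : ℕ) : MeasurableSpace (Equiv.Perm (Fin n)) := ⊤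

/-- The uniform distribution on the permutations of `{1, …, n}`. -/
noncomputable def uniformPerm (n : ℕ) : Measure (Equiv.Perm (Fin n)) :=
  (PMF.uniformOfFintype (Equiv.Perm (Fin n))).toMeasure

/-- Row mean `a_{i·}`. -/
noncomputable def rowMean (n : ℕ) (a : Fin n → Fin n → ℝ) (i : Fin n) : ℝ :=
  (1 / (n : ℝ)) * ∑ j, a i j

/-- Column mean `a_{·j}`. -/
noncomputable def colMean (n : ℕ) (a : Fin n → Fin n → ℝ) (j : Fin n) : ℝ :=
  (1 / (n : ℝ)) * ∑ i, a i j

/-- Grand mean `a_{··}`. -/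
noncomputable def grandMean (n : ℕ) (a : Fin n → Fin n → ℝ) : ℝ :=
  (1 / (n : ℝ) ^ 2) * ∑ i, ∑ j, a i j

/-- The mean `μ_A = n a_{··}` of the Hoeffding statistic. -/
noncomputable def muA (n : ℕ) (a : Fin n → Fin n → ℝ) : ℝ :=
  n * grandMean n a

/-- The variance `σ_A²` of the Hoeffding statistic. -/
noncomputable def sigmaA2 (n : ℕ) (a : Fin n → Fin n → ℝ) : ℝ :=
  (1 / ((n : ℝ) - 1)) * ∑ i, ∑ j,
    (a i j - rowMean n a i - colMean n a j + grandMean n a) ^ 2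


section HPproof
open Real Finset Equiv

open Real Finset

lemma hp_expmul {y : ℝ} (hy : y ≤ 1) : Real.exp y * (1 - y) ≤ 1 := by
  have e0 : 1 - y ≤ Real.exp (-y) := by linarith [Real.add_one_le_exp (-y)]
  have e1 : Real.exp y * Real.exp (-y) = 1 := by rw [← Real.exp_add]; simp
  calc Real.exp y * (1 - y) ≤ Real.exp y * Real.exp (-y) :=
        mul_le_mul_of_nonneg_left e0 (Real.exp_pos y).le
    _ = 1 := e1

/-- `(2-h) e^h ≤ 2+h` for `h ≥ 0` (equivalent to `tanh(h/2) ≤ h/2`). -/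
lemma hp_tanh {h : ℝ} (hh : 0 ≤ h) : (2 - h) * Real.exp h ≤ 2 + h := by
  have key : MonotoneOn (fun x : ℝ => 2 + x - (2 - x) * Real.exp x) (Set.Ici 0) := by
    apply monotoneOn_of_deriv_nonneg (convex_Ici 0)
    · fun_prop
    · fun_prop
    · intro x hx
      rw [interior_Ici] at hx
      have hx' : (0:ℝ) < x := hx
      have hd : HasDerivAt (fun x : ℝ => 2 + x - (2 - x) * Real.exp x)
          (1 - ((-1) * Real.exp x + (2 - x) * Real.exp x)) x := by
        have h1 : HasDerivAt (fun x : ℝ => 2 + x) 1 x := by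
          simpa using (hasDerivAt_id x).const_add (2:ℝ)
        have h2 : HasDerivAt (fun x : ℝ => (2 - x) * Real.exp x)
            ((-1) * Real.exp x + (2 - x) * Real.exp x) x := by
          have ha : HasDerivAt (fun x : ℝ => 2 - x) (-1) x := by
            simpa using (hasDerivAt_id x).const_sub (2:ℝ)
          simpa using ha.fun_mul (Real.hasDerivAt_exp x)
        exact h1.sub h2
      rw [hd.deriv]
      have h3 : (1 - x) * Real.exp x ≤ 1 := by
        rcases le_or_gt 1 x with hx1 | hx1
        · nlinarith [Real.exp_pos x]
        · have := hp_expmul (y := x) hx1.le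
          linarith [this]
      nlinarith
  have h0 : (fun x : ℝ => 2 + x - (2 - x) * Real.exp x) 0 ≤ _ :=
    key (Set.self_mem_Ici) (Set.mem_Ici.2 hh) hh
  simp at h0
  nlinarith [h0]

lemma hp_core' (v d : ℝ) (hd : 0 ≤ d) :
    d * (Real.exp (v + d) - Real.exp v) ≤ d ^ 2 * (Real.exp (v + d) + Real.exp v) / 2 := by
  rw [Real.exp_add]
  have h := hp_tanh hd
  have h2 : Real.exp d - 1 ≤ d * (Real.exp d + 1) / 2 := by nlinarith [h]
  nlinarith [mul_le_mul_of_nonneg_left h2 (mul_nonneg hd (Real.exp_pos v).le),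
    Real.exp_pos v, Real.exp_pos d]

/-- core convexity inequality -/
lemma hp_core {u v : ℝ} : (u - v) * (Real.exp u - Real.exp v) ≤
    (u - v) ^ 2 * (Real.exp u + Real.exp v) / 2 := by
  rcases le_total v u with hvu | huv
  · have := hp_core' v (u - v) (sub_nonneg.2 hvu)
    rw [show v + (u - v) = u by ring] at this
    nlinarith [this]
  · have := hp_core' u (v - u) (sub_nonneg.2 huv)
    rw [show u + (v - u) = v by ring] at this
    nlinarith [this]

lemma hp_exp_ineq {θ x y : ℝ} (hθ : 0 ≤ θ) :
    (x - y) * (Real.exp (θ * x) - Real.exp (θ * y)) ≤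
      θ / 2 * ((x - y) ^ 2 * (Real.exp (θ * x) + Real.exp (θ * y))) := by
  rcases eq_or_lt_of_le hθ with h0 | h0
  · simp [← h0]
  · have := hp_core (u := θ * x) (v := θ * y)
    have hx : θ * x - θ * y = θ * (x - y) := by ring
    rw [hx] at this
    have h2 : θ * ((x - y) * (Real.exp (θ * x) - Real.exp (θ * y))) ≤
        θ * (θ / 2 * ((x - y) ^ 2 * (Real.exp (θ * x) + Real.exp (θ * y)))) := by
      nlinarith [this]
    exact le_of_mul_le_mul_left h2 h0

/-- key Bernstein inequality: `e^y · 2(1-y)² ≤ 2 - y` on `[0,1)` -/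
lemma hp_key {y : ℝ} (h0 : 0 ≤ y) (h1 : y < 1) :
    Real.exp y * (2 * (1 - y) ^ 2) ≤ 2 - y := by
  have h2 := hp_expmul (y := y) h1.le
  nlinarith [Real.exp_pos y]

open Real Finset Equiv

variable {n : ℕ}

/-- the centered Hoeffding statistic -/
def hpF (c : Fin n → Fin n → ℝ) (p : Equiv.Perm (Fin n)) : ℝ := ∑ i, c i (p i)

/-- swapping two values changes `hpF` by at most `4N`. -/
lemma hp_swap_diff (c : Fin n → Fin n → ℝ) {N : ℝ} (hN : 0 ≤ N)
    (hc : ∀ i j, |c i j| ≤ N) (u v : Fin n) (p : Equiv.Perm (Fin n)) :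
    |hpF c (Equiv.swap u v * p) - hpF c p| ≤ 4 * N := by
  have key : hpF c (Equiv.swap u v * p) - hpF c p =
      ∑ i, (c i (Equiv.swap u v (p i)) - c i (p i)) := by
    simp [hpF, Finset.sum_sub_distrib, Equiv.Perm.mul_apply]
  set s : Finset (Fin n) := {p⁻¹ u, p⁻¹ v} with hs
  have hz : ∀ i ∈ (univ : Finset (Fin n)), i ∉ s →
      c i (Equiv.swap u v (p i)) - c i (p i) = 0 := by
    intro i _ hi
    simp only [hs, Finset.mem_insert, Finset.mem_singleton, not_or] at hi
    have h1 : p i ≠ u := by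
      intro h; exact hi.1 (by rw [← h]; simp)
    have h2 : p i ≠ v := by
      intro h; exact hi.2 (by rw [← h]; simp)
    rw [Equiv.swap_apply_of_ne_of_ne h1 h2, sub_self]
  have key2 : hpF c (Equiv.swap u v * p) - hpF c p =
      ∑ i ∈ s, (c i (Equiv.swap u v (p i)) - c i (p i)) := by
    rw [key]; exact (Finset.sum_subset (Finset.subset_univ s) (by
      intro x hx hxs; exact hz x hx hxs)).symm
  rw [key2]
  calc |∑ i ∈ s, (c i (Equiv.swap u v (p i)) - c i (p i))|
      ≤ ∑ i ∈ s, |c i (Equiv.swap u v (p i)) - c i (p i)| :=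
        Finset.abs_sum_le_sum_abs _ _
    _ ≤ ∑ _i ∈ s, 2 * N := by
        refine Finset.sum_le_sum fun i _ => ?_
        calc |c i (Equiv.swap u v (p i)) - c i (p i)|
            ≤ |c i (Equiv.swap u v (p i))| + |c i (p i)| := abs_sub _ _
          _ ≤ N + N := add_le_add (hc _ _) (hc _ _)
          _ = 2 * N := by ring
    _ = s.card * (2 * N) := by rw [Finset.sum_const, nsmul_eq_mul]
    _ ≤ 2 * (2 * N) := by
        have : s.card ≤ 2 := by
          apply le_trans (Finset.card_insert_le _ _); simp
        have h2 : (s.card : ℝ) ≤ 2 := by exact_mod_cast this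
        nlinarith
    _ = 4 * N := by ring

/-- double swap: a permutation sending `k ↦ k'`, `l ↦ l'` moving `hpF` by at most `8N`. -/
lemma hp_double_swap (c : Fin n → Fin n → ℝ) {N : ℝ} (hN : 0 ≤ N)
    (hc : ∀ i j, |c i j| ≤ N)
    {k l k' l' : Fin n} (hkl : k ≠ l) (hkl' : k' ≠ l') :
    ∃ ρ : Equiv.Perm (Fin n), ρ k = k' ∧ ρ l = l' ∧
      ∀ p, |hpF c (ρ * p) - hpF c p| ≤ 8 * N := by
  refine ⟨Equiv.swap (Equiv.swap k k' l) l' * Equiv.swap k k', ?_, ?_, ?_⟩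
  · have h1 : Equiv.swap k k' l ≠ k' := by
      intro h
      exact hkl (Equiv.injective _ (h.trans (Equiv.swap_apply_left k k').symm)).symm
    simp [Equiv.Perm.mul_apply, Equiv.swap_apply_left,
      Equiv.swap_apply_of_ne_of_ne (Ne.symm h1) hkl']
  · simp [Equiv.Perm.mul_apply, Equiv.swap_apply_left]
  · intro p
    have e1 := hp_swap_diff c hN hc k k' p
    have e2 := hp_swap_diff c hN hc (Equiv.swap k k' l) l' (Equiv.swap k k' * p)
    rw [mul_assoc]
    calc |hpF c (Equiv.swap (Equiv.swap k k' l) l' * (Equiv.swap k k' * p)) - hpF c p|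
        ≤ |hpF c (Equiv.swap (Equiv.swap k k' l) l' * (Equiv.swap k k' * p)) -
            hpF c (Equiv.swap k k' * p)| + |hpF c (Equiv.swap k k' * p) - hpF c p| :=
          abs_sub_le _ _ _
      _ ≤ 4 * N + 4 * N := add_le_add e2 e1
      _ = 8 * N := by ring

noncomputable def hpM (c : Fin n → Fin n → ℝ) (θ : ℝ) : ℝ :=
  ∑ p : Equiv.Perm (Fin n), Real.exp (θ * hpF c p)

lemma hpM_pos (c : Fin n → Fin n → ℝ) (θ : ℝ) : 0 < hpM c θ :=
  Finset.sum_pos (fun p _ => Real.exp_pos _) ⟨1, Finset.mem_univ 1⟩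

lemma hp_reindex (τ : Equiv.Perm (Fin n)) (f : Equiv.Perm (Fin n) → ℝ) :
    ∑ p : Equiv.Perm (Fin n), f (p * τ) = ∑ p : Equiv.Perm (Fin n), f p :=
  Equiv.sum_comp (Equiv.mulRight τ) f

lemma hp_FD (c : Fin n → Fin n → ℝ) (i j : Fin n) (p : Equiv.Perm (Fin n)) :
    hpF c (p * Equiv.swap i j) =
      hpF c p - (c i (p i) + c j (p j) - c i (p j) - c j (p i)) := by
  rcases eq_or_ne i j with rfl | hij
  · simp [Equiv.swap_self, hpF]
  · have key : hpF c (p * Equiv.swap i j) - hpF c p =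
        ∑ m ∈ ({i, j} : Finset (Fin n)), (c m (p (Equiv.swap i j m)) - c m (p m)) := by
      simp only [hpF, Equiv.Perm.mul_apply, ← Finset.sum_sub_distrib]
      refine (Finset.sum_subset (Finset.subset_univ _) ?_).symm
      intro m _ hm
      simp only [Finset.mem_insert, Finset.mem_singleton, not_or] at hm
      rw [Equiv.swap_apply_of_ne_of_ne hm.1 hm.2, sub_self]
    rw [Finset.sum_pair hij] at key
    simp only [Equiv.swap_apply_left, Equiv.swap_apply_right] at key
    linarith [key]

lemma hp_Dneg (c : Fin n → Fin n → ℝ) (i j : Fin n) (p : Equiv.Perm (Fin n)) :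
    c i ((p * Equiv.swap i j) i) + c j ((p * Equiv.swap i j) j) -
        c i ((p * Equiv.swap i j) j) - c j ((p * Equiv.swap i j) i) =
      -(c i (p i) + c j (p j) - c i (p j) - c j (p i)) := by
  simp only [Equiv.Perm.mul_apply, Equiv.swap_apply_left, Equiv.swap_apply_right]
  ring

lemma hp_sum_D (c : Fin n → Fin n → ℝ) (hrow : ∀ i, ∑ j, c i j = 0)
    (p : Equiv.Perm (Fin n)) :
    ∑ i, ∑ j, (c i (p i) + c j (p j) - c i (p j) - c j (p i)) = 2 * n * hpF c p := by
  have h1 : ∀ i : Fin n, ∑ j, c i (p j) = 0 := fun i => by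
    rw [Equiv.sum_comp p (c i)]; exact hrow i
  have h2 : ∑ m : Fin n, (∑ j, c j (p m)) = 0 := by
    rw [Equiv.sum_comp p (fun x => ∑ j, c j x), Finset.sum_comm]
    simp [hrow]
  have expand : ∀ i : Fin n, ∑ j, (c i (p i) + c j (p j) - c i (p j) - c j (p i)) =
      (n : ℝ) * c i (p i) + hpF c p - ∑ j, c j (p i) := by
    intro i
    rw [Finset.sum_sub_distrib, Finset.sum_sub_distrib, Finset.sum_add_distrib,
      Finset.sum_const, h1 i, Finset.card_univ, Fintype.card_fin, nsmul_eq_mul]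
    simp [hpF]
  rw [Finset.sum_congr rfl (fun i _ => expand i), Finset.sum_sub_distrib,
    Finset.sum_add_distrib, h2, Finset.sum_const, Finset.card_univ, Fintype.card_fin,
    nsmul_eq_mul, ← Finset.mul_sum]
  show (n:ℝ) * hpF c p + (n:ℝ) * hpF c p - 0 = 2 * n * hpF c p
  ring

lemma hp_partition (i j : Fin n) (hij : i ≠ j) (g : Equiv.Perm (Fin n) → ℝ) :
    ∑ kl ∈ (Finset.univ : Finset (Fin n)).offDiag,
      ∑ p ∈ Finset.univ.filter (fun p : Equiv.Perm (Fin n) => (p i, p j) = kl), g p =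
      ∑ p : Equiv.Perm (Fin n), g p :=
  Finset.sum_fiberwise_of_maps_to
    (fun p _ => Finset.mem_offDiag.2
      ⟨Finset.mem_univ _, Finset.mem_univ _, fun h => hij (p.injective h)⟩) g

lemma hp_cond (c : Fin n → Fin n → ℝ) {N : ℝ} (hN : 0 ≤ N) (hc : ∀ i j, |c i j| ≤ N)
    {θ : ℝ} (hθ : 0 ≤ θ) (i j : Fin n) (hij : i ≠ j) {kl : Fin n × Fin n}
    (hkl : kl ∈ (Finset.univ : Finset (Fin n)).offDiag) :
    ((Finset.univ : Finset (Fin n)).offDiag.card : ℝ) *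
        ∑ p ∈ Finset.univ.filter (fun p : Equiv.Perm (Fin n) => (p i, p j) = kl),
          Real.exp (θ * hpF c p) ≤
      Real.exp (8 * N * θ) * hpM c θ := by
  have hkl2 := Finset.mem_offDiag.1 hkl
  have key : ∀ kl' ∈ (Finset.univ : Finset (Fin n)).offDiag,
      (∑ p ∈ Finset.univ.filter (fun p : Equiv.Perm (Fin n) => (p i, p j) = kl),
        Real.exp (θ * hpF c p)) ≤
      Real.exp (8 * N * θ) *
        ∑ p ∈ Finset.univ.filter (fun p : Equiv.Perm (Fin n) => (p i, p j) = kl'),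
          Real.exp (θ * hpF c p) := by
    intro kl' hkl'
    have hkl2' := Finset.mem_offDiag.1 hkl'
    obtain ⟨ρ, hk, hl, hd⟩ := hp_double_swap c hN hc hkl2.2.2 hkl2'.2.2
    have step1 : ∀ p ∈ Finset.univ.filter
        (fun p : Equiv.Perm (Fin n) => (p i, p j) = kl),
        Real.exp (θ * hpF c p) ≤ Real.exp (8 * N * θ) * Real.exp (θ * hpF c (ρ * p)) := by
      intro p _
      rw [← Real.exp_add, Real.exp_le_exp]
      have h1 : hpF c p - hpF c (ρ * p) ≤ 8 * N := by
        have := (abs_le.1 (hd p)).1; linarith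
      nlinarith [mul_le_mul_of_nonneg_left h1 hθ]
    calc (∑ p ∈ Finset.univ.filter (fun p : Equiv.Perm (Fin n) => (p i, p j) = kl),
          Real.exp (θ * hpF c p))
        ≤ ∑ p ∈ Finset.univ.filter (fun p : Equiv.Perm (Fin n) => (p i, p j) = kl),
            Real.exp (8 * N * θ) * Real.exp (θ * hpF c (ρ * p)) :=
          Finset.sum_le_sum step1
      _ = Real.exp (8 * N * θ) *
            ∑ p ∈ Finset.univ.filter (fun p : Equiv.Perm (Fin n) => (p i, p j) = kl),
              Real.exp (θ * hpF c (ρ * p)) := by rw [Finset.mul_sum]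
      _ = Real.exp (8 * N * θ) *
            ∑ q ∈ Finset.univ.filter (fun q : Equiv.Perm (Fin n) => (q i, q j) = kl'),
              Real.exp (θ * hpF c q) := by
          congr 1
          refine Finset.sum_nbij' (fun p => ρ * p) (fun q => ρ⁻¹ * q) ?_ ?_ ?_ ?_ ?_
          · intro p hp
            have h := (Finset.mem_filter.1 hp).2
            have h1 : p i = kl.1 := congrArg Prod.fst h
            have h2 : p j = kl.2 := congrArg Prod.snd h
            refine Finset.mem_filter.2 ⟨Finset.mem_univ _, ?_⟩
            have e1 : (ρ * p) i = kl'.1 := by rw [Equiv.Perm.mul_apply, h1, hk]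
            have e2 : (ρ * p) j = kl'.2 := by rw [Equiv.Perm.mul_apply, h2, hl]
            rw [e1, e2]
          · intro q hq
            have h := (Finset.mem_filter.1 hq).2
            have h1 : q i = kl'.1 := congrArg Prod.fst h
            have h2 : q j = kl'.2 := congrArg Prod.snd h
            refine Finset.mem_filter.2 ⟨Finset.mem_univ _, ?_⟩
            have e1 : (ρ⁻¹ * q) i = kl.1 := by
              rw [Equiv.Perm.mul_apply, h1, ← hk]; simp
            have e2 : (ρ⁻¹ * q) j = kl.2 := by
              rw [Equiv.Perm.mul_apply, h2, ← hl]; simp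
            rw [e1, e2]
          · intro p _; simp [← mul_assoc]
          · intro q _; simp [← mul_assoc]
          · intro p _; rfl
  have total := Finset.sum_le_sum key
  rw [Finset.sum_const, nsmul_eq_mul, ← Finset.mul_sum, hp_partition i j hij] at total
  exact total

/-- The central derivative bound: `M'(θ) ≤ θ σ² e^{8Nθ} M(θ)`. -/
theorem hp_deriv_bound (hn : 2 ≤ n) (c : Fin n → Fin n → ℝ) {N σ2 : ℝ}
    (hN : 0 ≤ N) (hc : ∀ i j, |c i j| ≤ N) (hrow : ∀ i, ∑ j, c i j = 0)
    (hquart : ∑ i, ∑ j, ∑ k, ∑ l, (c i k + c j l - c i l - c j k) ^ 2 =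
      4 * (n : ℝ) ^ 2 * ((n : ℝ) - 1) * σ2)
    {θ : ℝ} (hθ : 0 ≤ θ) :
    ∑ p : Equiv.Perm (Fin n), hpF c p * Real.exp (θ * hpF c p) ≤
      θ * σ2 * Real.exp (8 * N * θ) * hpM c θ := by
  classical
  set E : Equiv.Perm (Fin n) → ℝ := fun p => Real.exp (θ * hpF c p) with hE
  set D : Fin n → Fin n → Equiv.Perm (Fin n) → ℝ :=
    fun i j p => c i (p i) + c j (p j) - c i (p j) - c j (p i) with hD
  -- Step 1:  2n ∑ F e^{θF} = ∑_{i,j} T i j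
  have step1 : 2 * (n : ℝ) * ∑ p : Equiv.Perm (Fin n), hpF c p * E p =
      ∑ i, ∑ j, ∑ p : Equiv.Perm (Fin n), D i j p * E p := by
    have e1 : ∀ p, (∑ i, ∑ j, D i j p) * E p = 2 * (n:ℝ) * (hpF c p * E p) := by
      intro p; rw [hp_sum_D c hrow p]; ring
    calc 2 * (n : ℝ) * ∑ p : Equiv.Perm (Fin n), hpF c p * E p
        = ∑ p : Equiv.Perm (Fin n), (∑ i, ∑ j, D i j p) * E p := by
          rw [Finset.mul_sum]; exact (Finset.sum_congr rfl fun p _ => e1 p).symm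
      _ = ∑ p : Equiv.Perm (Fin n), ∑ i, ∑ j, D i j p * E p := by
          refine Finset.sum_congr rfl fun p _ => ?_
          rw [Finset.sum_mul]
          exact Finset.sum_congr rfl fun i _ => by rw [Finset.sum_mul]
      _ = ∑ i, ∑ j, ∑ p : Equiv.Perm (Fin n), D i j p * E p := by
          rw [Finset.sum_comm]
          exact Finset.sum_congr rfl fun i _ => Finset.sum_comm
  -- Step 2: per (i,j): T i j ≤ (θ/2) Q i j
  have step2 : ∀ i j, ∑ p : Equiv.Perm (Fin n), D i j p * E p ≤
      θ / 2 * ∑ p : Equiv.Perm (Fin n), (D i j p) ^ 2 * E p := by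
    intro i j
    set τ := Equiv.swap i j with hτ
    have ha : ∑ p : Equiv.Perm (Fin n), D i j p * Real.exp (θ * hpF c (p * τ)) =
        - ∑ p : Equiv.Perm (Fin n), D i j p * E p := by
      rw [← hp_reindex τ (fun q => D i j q * Real.exp (θ * hpF c (q * τ)))]
      rw [← Finset.sum_neg_distrib]
      refine Finset.sum_congr rfl fun p _ => ?_
      have h1 : D i j (p * τ) = - D i j p := hp_Dneg c i j p
      have h2 : (p * τ) * τ = p := by
        rw [mul_assoc, hτ, Equiv.swap_mul_self, mul_one]
      rw [h1, h2]; ring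
    have hb : ∑ p : Equiv.Perm (Fin n), (D i j p) ^ 2 * Real.exp (θ * hpF c (p * τ)) =
        ∑ p : Equiv.Perm (Fin n), (D i j p) ^ 2 * E p := by
      rw [← hp_reindex τ (fun q => (D i j q) ^ 2 * Real.exp (θ * hpF c (q * τ)))]
      refine Finset.sum_congr rfl fun p _ => ?_
      have h1 : D i j (p * τ) = - D i j p := hp_Dneg c i j p
      have h2 : (p * τ) * τ = p := by
        rw [mul_assoc, hτ, Equiv.swap_mul_self, mul_one]
      rw [h1, h2]; ring
    have hpt : ∀ p : Equiv.Perm (Fin n),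
        D i j p * (E p - Real.exp (θ * hpF c (p * τ))) ≤
        θ / 2 * ((D i j p) ^ 2 * (E p + Real.exp (θ * hpF c (p * τ)))) := by
      intro p
      have hd : hpF c p - hpF c (p * τ) = D i j p := by rw [hp_FD c i j p]; ring
      have := hp_exp_ineq (θ := θ) (x := hpF c p) (y := hpF c (p * τ)) hθ
      rw [hd] at this
      exact this
    have key : 2 * ∑ p : Equiv.Perm (Fin n), D i j p * E p ≤
        θ / 2 * (2 * ∑ p : Equiv.Perm (Fin n), (D i j p) ^ 2 * E p) := by
      have hsum := Finset.sum_le_sum (fun p (_ : p ∈ Finset.univ) => hpt p)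
      rw [show ∑ p : Equiv.Perm (Fin n), D i j p * (E p - Real.exp (θ * hpF c (p * τ)))
          = ∑ p : Equiv.Perm (Fin n), D i j p * E p -
            ∑ p : Equiv.Perm (Fin n), D i j p * Real.exp (θ * hpF c (p * τ)) by
        rw [← Finset.sum_sub_distrib]; exact Finset.sum_congr rfl fun p _ => by ring] at hsum
      rw [ha] at hsum
      rw [show ∑ p : Equiv.Perm (Fin n),
          θ / 2 * ((D i j p) ^ 2 * (E p + Real.exp (θ * hpF c (p * τ))))
          = θ / 2 * (∑ p : Equiv.Perm (Fin n), (D i j p) ^ 2 * E p +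
            ∑ p : Equiv.Perm (Fin n), (D i j p) ^ 2 * Real.exp (θ * hpF c (p * τ))) by
        rw [← Finset.sum_add_distrib, Finset.mul_sum]
        exact Finset.sum_congr rfl fun p _ => by ring] at hsum
      rw [hb] at hsum
      linarith [hsum]
    linarith [key]
  -- Step 3: card(offDiag) * Q i j ≤ e^{8Nθ} M * ∑_{k,l} Dval²  (for all i j)
  have hM := hpM_pos c θ
  have step3 : ∀ i j, ((Finset.univ : Finset (Fin n)).offDiag.card : ℝ) *
      ∑ p : Equiv.Perm (Fin n), (D i j p) ^ 2 * E p ≤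
      Real.exp (8 * N * θ) * hpM c θ *
        ∑ k, ∑ l, (c i k + c j l - c i l - c j k) ^ 2 := by
    intro i j
    have hrhs : 0 ≤ Real.exp (8 * N * θ) * hpM c θ *
        ∑ k, ∑ l, (c i k + c j l - c i l - c j k) ^ 2 := by
      apply mul_nonneg (mul_nonneg (Real.exp_pos _).le hM.le)
      exact Finset.sum_nonneg fun k _ => Finset.sum_nonneg fun l _ => sq_nonneg _
    rcases eq_or_ne i j with rfl | hij
    · have hz : ∑ p : Equiv.Perm (Fin n), (D i i p) ^ 2 * E p = 0 := by
        refine Finset.sum_eq_zero fun p _ => ?_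
        have : D i i p = 0 := by simp only [hD]; ring
        rw [this]; ring
      rw [hz, mul_zero]
      exact hrhs
    · -- partition the sum over fibers
      have hpart := hp_partition i j hij (fun p => (D i j p) ^ 2 * E p)
      have fib : ∀ kl ∈ (Finset.univ : Finset (Fin n)).offDiag,
          ∑ p ∈ Finset.univ.filter (fun p : Equiv.Perm (Fin n) => (p i, p j) = kl),
            (D i j p) ^ 2 * E p =
          (c i kl.1 + c j kl.2 - c i kl.2 - c j kl.1) ^ 2 *
            ∑ p ∈ Finset.univ.filter (fun p : Equiv.Perm (Fin n) => (p i, p j) = kl),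
              E p := by
        intro kl _
        rw [Finset.mul_sum]
        refine Finset.sum_congr rfl fun p hp => ?_
        have h := (Finset.mem_filter.1 hp).2
        have h1 : p i = kl.1 := congrArg Prod.fst h
        have h2 : p j = kl.2 := congrArg Prod.snd h
        simp only [hD, h1, h2]
      have key : ((Finset.univ : Finset (Fin n)).offDiag.card : ℝ) *
          ∑ p : Equiv.Perm (Fin n), (D i j p) ^ 2 * E p =
          ∑ kl ∈ (Finset.univ : Finset (Fin n)).offDiag,
            (c i kl.1 + c j kl.2 - c i kl.2 - c j kl.1) ^ 2 *
            (((Finset.univ : Finset (Fin n)).offDiag.card : ℝ) *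
              ∑ p ∈ Finset.univ.filter (fun p : Equiv.Perm (Fin n) => (p i, p j) = kl),
                E p) := by
        rw [← hpart, Finset.mul_sum]
        refine Finset.sum_congr rfl fun kl hkl => ?_
        rw [fib kl hkl]; ring
      rw [key]
      have bound : ∀ kl ∈ (Finset.univ : Finset (Fin n)).offDiag,
          (c i kl.1 + c j kl.2 - c i kl.2 - c j kl.1) ^ 2 *
            (((Finset.univ : Finset (Fin n)).offDiag.card : ℝ) *
              ∑ p ∈ Finset.univ.filter (fun p : Equiv.Perm (Fin n) => (p i, p j) = kl),
                E p) ≤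
          (c i kl.1 + c j kl.2 - c i kl.2 - c j kl.1) ^ 2 *
            (Real.exp (8 * N * θ) * hpM c θ) := fun kl hkl =>
        mul_le_mul_of_nonneg_left (hp_cond c hN hc hθ i j hij hkl) (sq_nonneg _)
      calc ∑ kl ∈ (Finset.univ : Finset (Fin n)).offDiag,
            (c i kl.1 + c j kl.2 - c i kl.2 - c j kl.1) ^ 2 *
            (((Finset.univ : Finset (Fin n)).offDiag.card : ℝ) *
              ∑ p ∈ Finset.univ.filter (fun p : Equiv.Perm (Fin n) => (p i, p j) = kl),
                E p)
          ≤ ∑ kl ∈ (Finset.univ : Finset (Fin n)).offDiag,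
              (c i kl.1 + c j kl.2 - c i kl.2 - c j kl.1) ^ 2 *
              (Real.exp (8 * N * θ) * hpM c θ) := Finset.sum_le_sum bound
        _ ≤ ∑ kl ∈ (Finset.univ : Finset (Fin n)) ×ˢ (Finset.univ : Finset (Fin n)),
              (c i kl.1 + c j kl.2 - c i kl.2 - c j kl.1) ^ 2 *
              (Real.exp (8 * N * θ) * hpM c θ) := by
            refine Finset.sum_le_sum_of_subset_of_nonneg ?_ ?_
            · intro kl hkl
              have h := Finset.mem_offDiag.1 hkl
              exact Finset.mem_product.2 ⟨h.1, h.2.1⟩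
            · intro kl _ _
              exact mul_nonneg (sq_nonneg _) (mul_nonneg (Real.exp_pos _).le hM.le)
        _ = Real.exp (8 * N * θ) * hpM c θ *
              ∑ k, ∑ l, (c i k + c j l - c i l - c j k) ^ 2 := by
            rw [Finset.sum_product, Finset.mul_sum]
            refine Finset.sum_congr rfl fun k _ => ?_
            rw [Finset.mul_sum]
            exact Finset.sum_congr rfl fun l _ => by ring
  -- Final combination
  set X := ∑ p : Equiv.Perm (Fin n), hpF c p * E p with hX
  have hC : ((Finset.univ : Finset (Fin n)).offDiag.card : ℝ) = (n : ℝ) ^ 2 - n := by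
    rw [Finset.offDiag_card, Finset.card_univ, Fintype.card_fin]
    have h1 : n ≤ n * n := Nat.le_mul_of_pos_left n (by omega)
    push_cast [Nat.cast_sub h1]
    ring
  have step12 : 2 * (n : ℝ) * X ≤
      θ / 2 * ∑ i, ∑ j, ∑ p : Equiv.Perm (Fin n), (D i j p) ^ 2 * E p := by
    rw [step1]
    calc ∑ i, ∑ j, ∑ p : Equiv.Perm (Fin n), D i j p * E p
        ≤ ∑ i, ∑ j, (θ / 2 * ∑ p : Equiv.Perm (Fin n), (D i j p) ^ 2 * E p) :=
          Finset.sum_le_sum fun i _ => Finset.sum_le_sum fun j _ => step2 i j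
      _ = θ / 2 * ∑ i, ∑ j, ∑ p : Equiv.Perm (Fin n), (D i j p) ^ 2 * E p := by
          rw [Finset.mul_sum]
          exact Finset.sum_congr rfl fun i _ => (Finset.mul_sum _ _ _).symm
  have step4 : ((Finset.univ : Finset (Fin n)).offDiag.card : ℝ) *
      ∑ i, ∑ j, ∑ p : Equiv.Perm (Fin n), (D i j p) ^ 2 * E p ≤
      Real.exp (8 * N * θ) * hpM c θ * (4 * (n : ℝ) ^ 2 * ((n : ℝ) - 1) * σ2) := by
    rw [← hquart, Finset.mul_sum]
    rw [show Real.exp (8 * N * θ) * hpM c θ *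
        ∑ i, ∑ j, ∑ k, ∑ l, (c i k + c j l - c i l - c j k) ^ 2
        = ∑ i, Real.exp (8 * N * θ) * hpM c θ *
            ∑ j, ∑ k, ∑ l, (c i k + c j l - c i l - c j k) ^ 2 by rw [Finset.mul_sum]]
    refine Finset.sum_le_sum fun i _ => ?_
    rw [Finset.mul_sum, Finset.mul_sum]
    exact Finset.sum_le_sum fun j _ => step3 i j
  have hn2 : (2 : ℝ) ≤ (n : ℝ) := by exact_mod_cast hn
  have hpos : 0 < 2 * (n : ℝ) ^ 2 * ((n : ℝ) - 1) := by nlinarith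
  have hθ2 : 0 ≤ θ / 2 := by linarith
  have hCnn : (0:ℝ) ≤ (n : ℝ) ^ 2 - n := by nlinarith
  have step4' : ((n : ℝ) ^ 2 - n) *
      ∑ i, ∑ j, ∑ p : Equiv.Perm (Fin n), (D i j p) ^ 2 * E p ≤
      Real.exp (8 * N * θ) * hpM c θ * (4 * (n : ℝ) ^ 2 * ((n : ℝ) - 1) * σ2) := by
    rw [← hC]; exact step4
  have final : (2 * (n : ℝ) ^ 2 * ((n : ℝ) - 1)) * X ≤
      (2 * (n : ℝ) ^ 2 * ((n : ℝ) - 1)) *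
        (θ * σ2 * Real.exp (8 * N * θ) * hpM c θ) := by
    calc (2 * (n : ℝ) ^ 2 * ((n : ℝ) - 1)) * X
        = ((n : ℝ) ^ 2 - n) * (2 * (n : ℝ) * X) := by ring
      _ ≤ ((n : ℝ) ^ 2 - n) *
            (θ / 2 * ∑ i, ∑ j, ∑ p : Equiv.Perm (Fin n), (D i j p) ^ 2 * E p) :=
          mul_le_mul_of_nonneg_left step12 hCnn
      _ = θ / 2 * (((n : ℝ) ^ 2 - n) *
            ∑ i, ∑ j, ∑ p : Equiv.Perm (Fin n), (D i j p) ^ 2 * E p) := by ring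
      _ ≤ θ / 2 * (Real.exp (8 * N * θ) * hpM c θ *
            (4 * (n : ℝ) ^ 2 * ((n : ℝ) - 1) * σ2)) :=
          mul_le_mul_of_nonneg_left step4' hθ2
      _ = (2 * (n : ℝ) ^ 2 * ((n : ℝ) - 1)) *
            (θ * σ2 * Real.exp (8 * N * θ) * hpM c θ) := by ring
  exact le_of_mul_le_mul_left final hpos

lemma hpM_hasDeriv (c : Fin n → Fin n → ℝ) (s : ℝ) :
    HasDerivAt (hpM c)
      (∑ p : Equiv.Perm (Fin n), hpF c p * Real.exp (s * hpF c p)) s := by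
  have h : ∀ p ∈ (Finset.univ : Finset (Equiv.Perm (Fin n))),
      HasDerivAt (fun s => Real.exp (s * hpF c p))
        (hpF c p * Real.exp (s * hpF c p)) s := by
    intro p _
    have h1 : HasDerivAt (fun s : ℝ => s * hpF c p) (hpF c p) s := by
      simpa using hasDerivAt_mul_const (hpF c p) (x := s)
    have := h1.exp
    simpa [mul_comm] using this
  exact HasDerivAt.fun_sum h

theorem hp_mgf_bound (hn : 2 ≤ n) (c : Fin n → Fin n → ℝ) {N σ2 : ℝ}
    (hN : 0 ≤ N) (hσ2 : 0 ≤ σ2) (hc : ∀ i j, |c i j| ≤ N)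
    (hrow : ∀ i, ∑ j, c i j = 0)
    (hquart : ∑ i, ∑ j, ∑ k, ∑ l, (c i k + c j l - c i l - c j k) ^ 2 =
      4 * (n : ℝ) ^ 2 * ((n : ℝ) - 1) * σ2)
    {θ : ℝ} (hθ : 0 ≤ θ) (hθ1 : 8 * N * θ < 1) :
    hpM c θ ≤ hpM c 0 * Real.exp (σ2 * (θ ^ 2 / (2 * (1 - 8 * N * θ)))) := by
  set φ : ℝ → ℝ := fun s =>
    σ2 * (s ^ 2 / (2 * (1 - 8 * N * s))) + Real.log (hpM c 0) - Real.log (hpM c s)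
    with hφdef
  -- derivative facts on Icc 0 θ
  have hden : ∀ s ∈ Set.Icc 0 θ, 0 < 1 - 8 * N * s := by
    intro s hs
    have h1 : 8 * N * s ≤ 8 * N * θ := by
      apply mul_le_mul_of_nonneg_left hs.2; positivity
    linarith
  have hder : ∀ s ∈ Set.Icc 0 θ, HasDerivAt φ
      (σ2 * ((2 * s * (2 * (1 - 8 * N * s)) - s ^ 2 * (2 * -(8 * N))) /
          (2 * (1 - 8 * N * s)) ^ 2) -
        (∑ p : Equiv.Perm (Fin n), hpF c p * Real.exp (s * hpF c p)) / hpM c s) s := by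
    intro s hs
    have h1 : HasDerivAt (fun s : ℝ => s ^ 2) (2 * s) s := by
      simpa using hasDerivAt_pow 2 s
    have h2 : HasDerivAt (fun s : ℝ => 2 * (1 - 8 * N * s)) (2 * -(8 * N)) s := by
      have : HasDerivAt (fun s : ℝ => 1 - 8 * N * s) (-(8 * N)) s := by
        simpa using ((hasDerivAt_id s).const_mul (8 * N)).const_sub 1
      simpa using this.const_mul 2
    have h3 : HasDerivAt (fun s : ℝ => s ^ 2 / (2 * (1 - 8 * N * s)))
        ((2 * s * (2 * (1 - 8 * N * s)) - s ^ 2 * (2 * -(8 * N))) /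
          (2 * (1 - 8 * N * s)) ^ 2) s := by
      exact h1.div h2 (by have := hden s hs; positivity)
    have h4 : HasDerivAt (fun s => Real.log (hpM c s))
        ((∑ p : Equiv.Perm (Fin n), hpF c p * Real.exp (s * hpF c p)) / hpM c s) s :=
      (hpM_hasDeriv c s).log (hpM_pos c s).ne'
    exact ((h3.const_mul σ2).add_const (Real.log (hpM c 0))).sub h4
  have hmono : MonotoneOn φ (Set.Icc 0 θ) := by
    apply monotoneOn_of_deriv_nonneg (convex_Icc 0 θ)
    · intro s hs
      exact (hder s hs).continuousAt.continuousWithinAt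
    · intro s hs
      rw [interior_Icc] at hs
      exact (hder s (Set.mem_Icc_of_Ioo hs)).differentiableAt.differentiableWithinAt
    · intro s hs
      rw [interior_Icc] at hs
      have hs' := Set.mem_Icc_of_Ioo hs
      rw [(hder s hs').deriv]
      have hd := hden s hs'
      have hs0 : 0 ≤ s := hs'.1
      set y := 8 * N * s with hy
      have hy0 : 0 ≤ y := by rw [hy]; positivity
      have hy1 : y < 1 := by linarith
      -- scalar comparison : s e^y ≤ Hder
      have hkey := hp_key hy0 hy1
      have hH : s * Real.exp y ≤
          (2 * s * (2 * (1 - y)) - s ^ 2 * (2 * -(8 * N))) / (2 * (1 - y)) ^ 2 := by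
        rw [div_eq_inv_mul, ← sub_nonneg]
        have hsq : (0:ℝ) < (2 * (1 - y)) ^ 2 := by positivity
        have expand : ((2 * (1 - y)) ^ 2)⁻¹ *
            (2 * s * (2 * (1 - y)) - s ^ 2 * (2 * -(8 * N))) - s * Real.exp y =
            ((2 * (1 - y)) ^ 2)⁻¹ *
              ((2 * s * (2 * (1 - y)) - s ^ 2 * (2 * -(8 * N))) -
                s * Real.exp y * (2 * (1 - y)) ^ 2) := by
          field_simp
        rw [expand]
        apply mul_nonneg (by positivity)
        have h8 : s ^ 2 * (2 * -(8 * N)) = -(2 * y * s) := by rw [hy]; ring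
        rw [h8]
        have hmul := mul_le_mul_of_nonneg_left hkey hs0
        -- s * (e^y * 2(1-y)^2) ≤ s * (2 - y)
        nlinarith [hmul]
      -- mgf derivative bound
      have hMp := hpM_pos c s
      have hdb := hp_deriv_bound hn c hN hc hrow hquart hs0
      have hdiv : (∑ p : Equiv.Perm (Fin n), hpF c p * Real.exp (s * hpF c p)) / hpM c s ≤
          s * σ2 * Real.exp y := by
        rw [div_le_iff₀ hMp]
        calc (∑ p : Equiv.Perm (Fin n), hpF c p * Real.exp (s * hpF c p))
            ≤ s * σ2 * Real.exp (8 * N * s) * hpM c s := hdb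
          _ = s * σ2 * Real.exp y * hpM c s := by rw [hy]
      have hH2 : σ2 * (s * Real.exp y) ≤ σ2 *
          ((2 * s * (2 * (1 - y)) - s ^ 2 * (2 * -(8 * N))) / (2 * (1 - y)) ^ 2) :=
        mul_le_mul_of_nonneg_left hH hσ2
      have : (∑ p : Equiv.Perm (Fin n), hpF c p * Real.exp (s * hpF c p)) / hpM c s ≤
          σ2 * ((2 * s * (2 * (1 - y)) - s ^ 2 * (2 * -(8 * N))) / (2 * (1 - y)) ^ 2) := by
        calc (∑ p : Equiv.Perm (Fin n), hpF c p * Real.exp (s * hpF c p)) / hpM c s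
            ≤ s * σ2 * Real.exp y := hdiv
          _ = σ2 * (s * Real.exp y) := by ring
          _ ≤ _ := hH2
      linarith [this]
  -- conclude
  have h0 : φ 0 = 0 := by simp [hφdef]
  have hθmem : θ ∈ Set.Icc 0 θ := Set.mem_Icc.2 ⟨hθ, le_refl θ⟩
  have h0mem : (0:ℝ) ∈ Set.Icc 0 θ := Set.mem_Icc.2 ⟨le_refl 0, hθ⟩
  have hle := hmono h0mem hθmem hθ
  rw [h0] at hle
  have hlog : Real.log (hpM c θ) ≤
      Real.log (hpM c 0) + σ2 * (θ ^ 2 / (2 * (1 - 8 * N * θ))) := by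
    simp only [hφdef] at hle
    linarith [hle]
  calc hpM c θ = Real.exp (Real.log (hpM c θ)) := (Real.exp_log (hpM_pos c θ)).symm
    _ ≤ Real.exp (Real.log (hpM c 0) + σ2 * (θ ^ 2 / (2 * (1 - 8 * N * θ)))) :=
        Real.exp_le_exp.2 hlog
    _ = hpM c 0 * Real.exp (σ2 * (θ ^ 2 / (2 * (1 - 8 * N * θ)))) := by
        rw [Real.exp_add, Real.exp_log (hpM_pos c 0)]

theorem hp_chernoff (hn : 2 ≤ n) (c : Fin n → Fin n → ℝ) {N σ2 : ℝ}
    (hN : 0 ≤ N) (hσ2 : 0 < σ2) (hc : ∀ i j, |c i j| ≤ N)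
    (hrow : ∀ i, ∑ j, c i j = 0)
    (hquart : ∑ i, ∑ j, ∑ k, ∑ l, (c i k + c j l - c i l - c j k) ^ 2 =
      4 * (n : ℝ) ^ 2 * ((n : ℝ) - 1) * σ2)
    {t : ℝ} (ht : 0 ≤ t) :
    ((Finset.univ.filter (fun p : Equiv.Perm (Fin n) => t ≤ hpF c p)).card : ℝ) ≤
      (Fintype.card (Equiv.Perm (Fin n)) : ℝ) *
        Real.exp (-t ^ 2 / (2 * (σ2 + 8 * N * t))) := by
  have hA : 0 < σ2 + 8 * N * t := by positivity
  set θ := t / (σ2 + 8 * N * t) with hθdef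
  have hθ0 : 0 ≤ θ := div_nonneg ht hA.le
  have hθ1 : 8 * N * θ < 1 := by
    rw [hθdef, show 8 * N * (t / (σ2 + 8 * N * t)) = 8 * N * t / (σ2 + 8 * N * t) by ring]
    rw [div_lt_one hA]
    linarith
  have hM0 : hpM c 0 = (Fintype.card (Equiv.Perm (Fin n)) : ℝ) := by
    simp [hpM, Finset.card_univ]
  have count : ((Finset.univ.filter (fun p : Equiv.Perm (Fin n) => t ≤ hpF c p)).card : ℝ) *
      Real.exp (θ * t) ≤ hpM c θ := by
    have hterm : ∀ p ∈ Finset.univ.filter (fun p : Equiv.Perm (Fin n) => t ≤ hpF c p),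
        Real.exp (θ * t) ≤ Real.exp (θ * hpF c p) := fun p hp =>
      Real.exp_le_exp.2 (mul_le_mul_of_nonneg_left (Finset.mem_filter.1 hp).2 hθ0)
    calc ((Finset.univ.filter (fun p : Equiv.Perm (Fin n) => t ≤ hpF c p)).card : ℝ) *
          Real.exp (θ * t)
        = ∑ _p ∈ Finset.univ.filter (fun p : Equiv.Perm (Fin n) => t ≤ hpF c p),
            Real.exp (θ * t) := by rw [Finset.sum_const, nsmul_eq_mul]
      _ ≤ ∑ p ∈ Finset.univ.filter (fun p : Equiv.Perm (Fin n) => t ≤ hpF c p),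
            Real.exp (θ * hpF c p) := Finset.sum_le_sum hterm
      _ ≤ ∑ p : Equiv.Perm (Fin n), Real.exp (θ * hpF c p) :=
          Finset.sum_le_sum_of_subset_of_nonneg (Finset.subset_univ _)
            (fun p _ _ => (Real.exp_pos _).le)
      _ = hpM c θ := rfl
  have hmgf := hp_mgf_bound hn c hN hσ2.le hc hrow hquart hθ0 hθ1
  rw [hM0] at hmgf
  have halg : σ2 * (θ ^ 2 / (2 * (1 - 8 * N * θ))) - θ * t =
      -t ^ 2 / (2 * (σ2 + 8 * N * t)) := by
    have h1 : 1 - 8 * N * θ = σ2 / (σ2 + 8 * N * t) := by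
      rw [hθdef]; field_simp; ring
    rw [h1, hθdef]
    field_simp
    ring
  calc ((Finset.univ.filter (fun p : Equiv.Perm (Fin n) => t ≤ hpF c p)).card : ℝ)
      = ((Finset.univ.filter (fun p : Equiv.Perm (Fin n) => t ≤ hpF c p)).card : ℝ) *
          Real.exp (θ * t) * Real.exp (-(θ * t)) := by
        rw [mul_assoc, ← Real.exp_add]; simp
    _ ≤ hpM c θ * Real.exp (-(θ * t)) :=
        mul_le_mul_of_nonneg_right count (Real.exp_pos _).le
    _ ≤ (Fintype.card (Equiv.Perm (Fin n)) : ℝ) *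
          Real.exp (σ2 * (θ ^ 2 / (2 * (1 - 8 * N * θ)))) * Real.exp (-(θ * t)) :=
        mul_le_mul_of_nonneg_right hmgf (Real.exp_pos _).le
    _ = (Fintype.card (Equiv.Perm (Fin n)) : ℝ) *
          Real.exp (-t ^ 2 / (2 * (σ2 + 8 * N * t))) := by
        rw [mul_assoc, ← Real.exp_add, show σ2 * (θ ^ 2 / (2 * (1 - 8 * N * θ))) +
          -(θ * t) = σ2 * (θ ^ 2 / (2 * (1 - 8 * N * θ))) - θ * t by ring, halg]

lemma hp_sq_expand (f : Fin n → ℝ) (a : ℝ) :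
    ∑ l, (f l + a) ^ 2 = (∑ l, (f l) ^ 2) + 2 * a * (∑ l, f l) + (n : ℝ) * a ^ 2 := by
  have h : ∀ l ∈ (Finset.univ : Finset (Fin n)),
      (f l + a) ^ 2 = (f l) ^ 2 + 2 * a * f l + a ^ 2 := fun l _ => by ring
  rw [Finset.sum_congr rfl h, Finset.sum_add_distrib, Finset.sum_add_distrib,
    ← Finset.mul_sum, Finset.sum_const, Finset.card_univ, Fintype.card_fin, nsmul_eq_mul]

lemma hp_quart (d : Fin n → Fin n → ℝ) (hrow : ∀ i, ∑ k, d i k = 0)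
    (hcol : ∀ k, ∑ i, d i k = 0) :
    ∑ i, ∑ j, ∑ k, ∑ l, (d i k + d j l - d i l - d j k) ^ 2 =
      4 * (n : ℝ) ^ 2 * ∑ i, ∑ k, (d i k) ^ 2 := by
  have expand1 : ∀ i j : Fin n, ∑ k, ∑ l, (d i k + d j l - d i l - d j k) ^ 2 =
      2 * (n : ℝ) * ∑ k, (d i k - d j k) ^ 2 := by
    intro i j
    have inner : ∀ k, ∑ l, (d i k + d j l - d i l - d j k) ^ 2 =
        (∑ l, (d j l - d i l) ^ 2) + (n : ℝ) * (d i k - d j k) ^ 2 := by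
      intro k
      have h0 : ∑ l, (d i k + d j l - d i l - d j k) ^ 2 =
          ∑ l, ((d j l - d i l) + (d i k - d j k)) ^ 2 :=
        Finset.sum_congr rfl fun l _ => by ring
      rw [h0, hp_sq_expand (fun l => d j l - d i l) (d i k - d j k)]
      have hz : ∑ l, (d j l - d i l) = 0 := by
        rw [Finset.sum_sub_distrib, hrow j, hrow i]; ring
      rw [hz]; ring
    rw [Finset.sum_congr rfl fun k _ => inner k, Finset.sum_add_distrib,
      Finset.sum_const, Finset.card_univ, Fintype.card_fin, nsmul_eq_mul,
      ← Finset.mul_sum]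
    have hswap : ∑ l, (d j l - d i l) ^ 2 = ∑ k, (d i k - d j k) ^ 2 :=
      Finset.sum_congr rfl fun l _ => by ring
    rw [hswap]; ring
  rw [Finset.sum_congr rfl fun i _ => Finset.sum_congr rfl fun j _ => expand1 i j]
  have expand2 : ∀ i j : Fin n, ∑ k, (d i k - d j k) ^ 2 =
      (∑ k, (d i k) ^ 2) + (∑ k, (d j k) ^ 2) - 2 * ∑ k, d i k * d j k := by
    intro i j
    have h : ∀ k ∈ (Finset.univ : Finset (Fin n)), (d i k - d j k) ^ 2 =
        (d i k) ^ 2 + (d j k) ^ 2 - 2 * (d i k * d j k) := fun k _ => by ring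
    rw [Finset.sum_congr rfl h, Finset.sum_sub_distrib, Finset.sum_add_distrib,
      ← Finset.mul_sum]
  have hC : ∀ i, ∑ j, ∑ k, d i k * d j k = 0 := by
    intro i
    rw [Finset.sum_comm]
    refine Finset.sum_eq_zero fun k _ => ?_
    rw [← Finset.mul_sum, hcol k, mul_zero]
  have inner3 : ∀ i, ∑ j, (2 * (n : ℝ) * ∑ k, (d i k - d j k) ^ 2) =
      2 * (n : ℝ) * ((n : ℝ) * (∑ k, (d i k) ^ 2) + (∑ j, ∑ k, (d j k) ^ 2)) := by
    intro i
    rw [← Finset.mul_sum]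
    congr 1
    rw [Finset.sum_congr rfl fun j _ => expand2 i j]
    rw [Finset.sum_sub_distrib, Finset.sum_add_distrib, Finset.sum_const,
      Finset.card_univ, Fintype.card_fin, nsmul_eq_mul, ← Finset.mul_sum, hC i]
    ring
  rw [Finset.sum_congr rfl fun i _ => inner3 i]
  have h1 : ∀ i ∈ (Finset.univ : Finset (Fin n)),
      2 * (n : ℝ) * ((n : ℝ) * (∑ k, (d i k) ^ 2) + (∑ j, ∑ k, (d j k) ^ 2)) =
      2 * (n : ℝ) ^ 2 * (∑ k, (d i k) ^ 2) +
        2 * (n : ℝ) * (∑ j, ∑ k, (d j k) ^ 2) := fun i _ => by ring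
  rw [Finset.sum_congr rfl h1, Finset.sum_add_distrib, ← Finset.mul_sum,
    Finset.sum_const, Finset.card_univ, Fintype.card_fin, nsmul_eq_mul]
  ring

section Glue
variable {n : ℕ} (a : Fin n → Fin n → ℝ)

lemma hp_row_total (hn : 0 < n) (i : Fin n) :
    ∑ j, (a i j - rowMean n a i) = 0 := by
  have h0 : (n : ℝ) ≠ 0 := Nat.cast_ne_zero.2 hn.ne'
  rw [Finset.sum_sub_distrib, Finset.sum_const, Finset.card_univ, Fintype.card_fin,
    nsmul_eq_mul, rowMean]
  field_simp
  ring

lemma hp_rowMean_total (hn : 0 < n) :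
    ∑ i, rowMean n a i = (n : ℝ) * grandMean n a := by
  have h0 : (n : ℝ) ≠ 0 := Nat.cast_ne_zero.2 hn.ne'
  simp only [rowMean, grandMean, ← Finset.mul_sum]
  field_simp

lemma hp_colMean_total (hn : 0 < n) :
    ∑ j, colMean n a j = (n : ℝ) * grandMean n a := by
  have h0 : (n : ℝ) ≠ 0 := Nat.cast_ne_zero.2 hn.ne'
  simp only [colMean, grandMean, ← Finset.mul_sum]
  rw [Finset.sum_comm]
  field_simp

lemma hp_col_single (hn : 0 < n) (j : Fin n) :
    ∑ i, a i j = (n : ℝ) * colMean n a j := by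
  have h0 : (n : ℝ) ≠ 0 := Nat.cast_ne_zero.2 hn.ne'
  rw [colMean]
  field_simp

lemma hp_drow (hn : 0 < n) (i : Fin n) :
    ∑ j, (a i j - rowMean n a i - colMean n a j + grandMean n a) = 0 := by
  have h1 := hp_row_total a hn i
  have h2 := hp_colMean_total a hn
  rw [show (fun j => a i j - rowMean n a i - colMean n a j + grandMean n a) =
    (fun j => (a i j - rowMean n a i) - (colMean n a j - grandMean n a)) from
    funext fun j => by ring]
  rw [Finset.sum_sub_distrib, h1, Finset.sum_sub_distrib, h2, Finset.sum_const,
    Finset.card_univ, Fintype.card_fin, nsmul_eq_mul]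
  ring

lemma hp_dcol (hn : 0 < n) (j : Fin n) :
    ∑ i, (a i j - rowMean n a i - colMean n a j + grandMean n a) = 0 := by
  have h1 := hp_col_single a hn j
  have h2 := hp_rowMean_total a hn
  rw [show (fun i => a i j - rowMean n a i - colMean n a j + grandMean n a) =
    (fun i => a i j - rowMean n a i - (colMean n a j - grandMean n a)) from
    funext fun i => by ring]
  rw [Finset.sum_sub_distrib, Finset.sum_sub_distrib, h1, h2, Finset.sum_const,
    Finset.card_univ, Fintype.card_fin, nsmul_eq_mul]
  ring

lemma hp_F_eq (hn : 0 < n) (p : Equiv.Perm (Fin n)) :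
    (∑ i, a i (p i)) - muA n a = hpF (fun i j => a i j - rowMean n a i) p := by
  have h2 := hp_rowMean_total a hn
  rw [hpF, Finset.sum_sub_distrib, muA, ← h2]

lemma hp_quart_a (hn : 3 ≤ n) (hσ : 0 < sigmaA2 n a) :
    ∑ i, ∑ j, ∑ k, ∑ l, ((fun i j => a i j - rowMean n a i) i k +
        (fun i j => a i j - rowMean n a i) j l -
        (fun i j => a i j - rowMean n a i) i l -
        (fun i j => a i j - rowMean n a i) j k) ^ 2 =
      4 * (n : ℝ) ^ 2 * ((n : ℝ) - 1) * sigmaA2 n a := by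
  have hn0 : 0 < n := by omega
  set d : Fin n → Fin n → ℝ :=
    fun i j => a i j - rowMean n a i - colMean n a j + grandMean n a with hd
  have hsame : ∀ i j k l : Fin n,
      ((fun i j => a i j - rowMean n a i) i k + (fun i j => a i j - rowMean n a i) j l -
        (fun i j => a i j - rowMean n a i) i l - (fun i j => a i j - rowMean n a i) j k)
      = d i k + d j l - d i l - d j k := by
    intro i j k l
    simp only [hd]
    ring
  have hq := hp_quart d (hp_drow a hn0) (hp_dcol a hn0)
  have hss : ∑ i, ∑ k, (d i k) ^ 2 = ((n : ℝ) - 1) * sigmaA2 n a := by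
    have hn1 : (n : ℝ) - 1 ≠ 0 := by
      have : (3 : ℝ) ≤ (n : ℝ) := by exact_mod_cast hn
      linarith
    rw [sigmaA2]
    field_simp
    rfl
  calc ∑ i, ∑ j, ∑ k, ∑ l, ((fun i j => a i j - rowMean n a i) i k +
        (fun i j => a i j - rowMean n a i) j l -
        (fun i j => a i j - rowMean n a i) i l -
        (fun i j => a i j - rowMean n a i) j k) ^ 2
      = ∑ i, ∑ j, ∑ k, ∑ l, (d i k + d j l - d i l - d j k) ^ 2 := by
        refine Finset.sum_congr rfl fun i _ => Finset.sum_congr rfl fun j _ =>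
          Finset.sum_congr rfl fun k _ => Finset.sum_congr rfl fun l _ => ?_
        rw [hsame i j k l]
    _ = 4 * (n : ℝ) ^ 2 * ∑ i, ∑ k, (d i k) ^ 2 := hq
    _ = 4 * (n : ℝ) ^ 2 * ((n : ℝ) - 1) * sigmaA2 n a := by rw [hss]; ring

end Glue

section Measure
variable {n : ℕ}

lemma hp_measure (pred : Equiv.Perm (Fin n) → Prop) [DecidablePred pred] :
    ((uniformPerm n) {p | pred p}).toReal =
      ((Finset.univ.filter pred).card : ℝ) / (Fintype.card (Equiv.Perm (Fin n)) : ℝ) := by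
  have hms : MeasurableSet {p : Equiv.Perm (Fin n) | pred p} :=
    MeasurableSpace.measurableSet_top
  rw [uniformPerm, PMF.toMeasure_uniformOfFintype_apply _ hms]
  rw [ENNReal.toReal_div, ENNReal.toReal_natCast, ENNReal.toReal_natCast,
    ← Set.toFinset_card, Set.toFinset_setOf]

theorem hp_tail_a (hn : 3 ≤ n) (a : Fin n → Fin n → ℝ) (hσ : 0 < sigmaA2 n a)
    (N : ℝ) (hnorm : IsGreatest {x : ℝ | ∃ i j, x = |a i j - rowMean n a i|} N)
    {t : ℝ} (ht : 0 ≤ t) :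
    ((uniformPerm n) {p | t ≤ (∑ i, a i (p i)) - muA n a}).toReal ≤
      Real.exp (-(t ^ 2) / (2 * (sigmaA2 n a + 8 * N * t))) := by
  have hn0 : 0 < n := by omega
  have hn2 : 2 ≤ n := by omega
  set c : Fin n → Fin n → ℝ := fun i j => a i j - rowMean n a i with hc_def
  have hN : 0 ≤ N := by
    obtain ⟨i, j, hij⟩ := hnorm.1
    rw [hij]; exact abs_nonneg _
  have hc : ∀ i j, |c i j| ≤ N := fun i j => hnorm.2 ⟨i, j, rfl⟩
  have hrow : ∀ i, ∑ j, c i j = 0 := hp_row_total a hn0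
  have hquart := hp_quart_a a hn hσ
  have hcount := hp_chernoff hn2 c hN hσ hc hrow hquart ht
  have hset : {p : Equiv.Perm (Fin n) | t ≤ (∑ i, a i (p i)) - muA n a} =
      {p : Equiv.Perm (Fin n) | t ≤ hpF c p} := by
    ext p
    simp only [Set.mem_setOf_eq, hp_F_eq a hn0 p]
    exact Iff.rfl
  rw [hset, hp_measure (fun p : Equiv.Perm (Fin n) => t ≤ hpF c p)]
  have hcard : (0 : ℝ) < (Fintype.card (Equiv.Perm (Fin n)) : ℝ) := by
    exact_mod_cast Fintype.card_pos
  rw [div_le_iff₀ hcard]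
  calc ((Finset.univ.filter (fun p : Equiv.Perm (Fin n) => t ≤ hpF c p)).card : ℝ)
      ≤ (Fintype.card (Equiv.Perm (Fin n)) : ℝ) *
          Real.exp (-t ^ 2 / (2 * (sigmaA2 n a + 8 * N * t))) := hcount
    _ = Real.exp (-(t ^ 2) / (2 * (sigmaA2 n a + 8 * N * t))) *
          (Fintype.card (Equiv.Perm (Fin n)) : ℝ) := by ring

-- negation lemmas
lemma hp_rowMean_neg (a : Fin n → Fin n → ℝ) (i : Fin n) :
    rowMean n (fun i j => -a i j) i = -rowMean n a i := by
  simp [rowMean, Finset.sum_neg_distrib]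

lemma hp_colMean_neg (a : Fin n → Fin n → ℝ) (j : Fin n) :
    colMean n (fun i j => -a i j) j = -colMean n a j := by
  simp [colMean, Finset.sum_neg_distrib]

lemma hp_grandMean_neg (a : Fin n → Fin n → ℝ) :
    grandMean n (fun i j => -a i j) = -grandMean n a := by
  simp [grandMean, Finset.sum_neg_distrib]

lemma hp_muA_neg (a : Fin n → Fin n → ℝ) : muA n (fun i j => -a i j) = -muA n a := by
  simp [muA, hp_grandMean_neg]

lemma hp_sigmaA2_neg (a : Fin n → Fin n → ℝ) :
    sigmaA2 n (fun i j => -a i j) = sigmaA2 n a := by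
  rw [sigmaA2, sigmaA2]
  congr 1
  refine Finset.sum_congr rfl fun i _ => Finset.sum_congr rfl fun j _ => ?_
  rw [hp_rowMean_neg, hp_colMean_neg, hp_grandMean_neg]
  ring

lemma hp_norm_neg (a : Fin n → Fin n → ℝ) :
    {x : ℝ | ∃ i j, x = |(fun i j => -a i j) i j - rowMean n (fun i j => -a i j) i|} =
      {x : ℝ | ∃ i j, x = |a i j - rowMean n a i|} := by
  ext x
  constructor
  · rintro ⟨i, j, h⟩
    refine ⟨i, j, ?_⟩
    rw [h, hp_rowMean_neg]
    rw [show -a i j - -rowMean n a i = -(a i j - rowMean n a i) by ring, abs_neg]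
  · rintro ⟨i, j, h⟩
    refine ⟨i, j, ?_⟩
    rw [h, hp_rowMean_neg]
    rw [show -a i j - -rowMean n a i = -(a i j - rowMean n a i) by ring, abs_neg]

end Measure


end HPproof

theorem hoeffding_concentration (n : ℕ) (hn : 3 ≤ n) (a : Fin n → Fin n → ℝ)
    (hσ : 0 < sigmaA2 n a)
    (normA : ℝ) (hnorm : IsGreatest {x : ℝ | ∃ i j, x = |a i j - rowMean n a i|} normA) :
    ∀ t : ℝ, 0 ≤ t →
      ((uniformPerm n) {p | t ≤ (∑ i, a i (p i)) - muA n a}).toReal ≤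
          Real.exp (-(t ^ 2) / (2 * (sigmaA2 n a + 8 * normA * t))) ∧
        ((uniformPerm n) {p | (∑ i, a i (p i)) - muA n a ≤ -t}).toReal ≤
          Real.exp (-(t ^ 2) / (2 * (sigmaA2 n a + 8 * normA * t))) := by
  intro t ht
  constructor
  · exact hp_tail_a hn a hσ normA hnorm ht
  · -- lower tail: apply to -a
    have hσ' : 0 < sigmaA2 n (fun i j => -a i j) := by rw [hp_sigmaA2_neg]; exact hσ
    have hnorm' : IsGreatest
        {x : ℝ | ∃ i j, x = |(fun i j => -a i j) i j -
          rowMean n (fun i j => -a i j) i|} normA := by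
      rw [hp_norm_neg]; exact hnorm
    have h := hp_tail_a hn (fun i j => -a i j) hσ' normA hnorm' ht
    rw [hp_sigmaA2_neg] at h
    have hset : {p : Equiv.Perm (Fin n) |
        t ≤ (∑ i, (fun i j => -a i j) i (p i)) - muA n (fun i j => -a i j)} =
        {p : Equiv.Perm (Fin n) | (∑ i, a i (p i)) - muA n a ≤ -t} := by
      ext p
      simp only [Set.mem_setOf_eq, hp_muA_neg, Finset.sum_neg_distrib]
      constructor <;> intro h' <;> linarith
    rw [hset] at h
    exact h
end

section
/- Let Y be a mean zero random variable with variance σ² ∈ (0,∞), and let Y* be defined on the same probability space and have the Y-zero biased distribution. Suppose Y* − Y ≤ c almost surely for some constant c > 0, and that m(s) = E[exp(sY)] is finite for all s ∈ [0, 1/c). Then for all θ ∈ (0, 1/c), E[exp(θY)] ≤ exp(σ²θ² / (2(1 − θc))). -/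
open MeasureTheory ProbabilityTheory Real Filter

lemma zbAux_exp_one_mul_le (t : ℝ) : Real.exp 1 * t ≤ Real.exp t := by
  have h := Real.add_one_le_exp (t - 1)
  have h2 : Real.exp 1 * ((t - 1) + 1) ≤ Real.exp 1 * Real.exp (t - 1) :=
    mul_le_mul_of_nonneg_left h (Real.exp_pos 1).le
  calc Real.exp 1 * t = Real.exp 1 * ((t - 1) + 1) := by ring
    _ ≤ Real.exp 1 * Real.exp (t - 1) := h2
    _ = Real.exp t := by rw [← Real.exp_add]; ring_nf

lemma zbAux1 (u v y : ℝ) (hy : 0 ≤ y) (hv : 0 < v) :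
    y * exp (u * y) ≤ exp ((u + v) * y) / (v * exp 1) := by
  have key : y ≤ exp (v * y) / (v * exp 1) := by
    rw [le_div_iff₀ (by positivity)]
    nlinarith [zbAux_exp_one_mul_le (v * y)]
  calc y * exp (u * y) ≤ (exp (v * y) / (v * exp 1)) * exp (u * y) :=
        mul_le_mul_of_nonneg_right key (exp_pos _).le
    _ = exp ((u + v) * y) / (v * exp 1) := by
        rw [div_mul_eq_mul_div, ← exp_add]; ring_nf

lemma zbAux2 (a y : ℝ) (ha : 0 < a) (hy : y ≤ 0) :
    (-y) * exp (a * y) ≤ 1 / (a * exp 1) := by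
  rw [le_div_iff₀ (by positivity)]
  have h := zbAux_exp_one_mul_le (-(a * y))
  have h3 : exp 1 * (-(a * y)) * exp (a * y) ≤ exp (-(a * y)) * exp (a * y) :=
    mul_le_mul_of_nonneg_right h (exp_pos _).le
  have h2 : exp (-(a * y)) * exp (a * y) = 1 := by rw [← exp_add]; simp
  rw [h2] at h3
  nlinarith [exp_pos (a * y)]

lemma zbAux_bound {a b s' : ℝ} (x y : ℝ) (ha : 0 < a) (hax : a ≤ x) (hxb : x ≤ b) (hbs : b < s') :
    |exp (x * y) * y| ≤ exp (s' * y) / ((s' - b) * exp 1) + 1 / (a * exp 1) := by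
  rcases le_or_gt 0 y with hy | hy
  · have he : |exp (x * y) * y| = y * exp (x * y) := by
      rw [abs_of_nonneg (by positivity)]; ring
    rw [he]
    have h1 : y * exp (x * y) ≤ y * exp (b * y) :=
      mul_le_mul_of_nonneg_left (exp_le_exp.2 (mul_le_mul_of_nonneg_right hxb hy)) hy
    have h2 : y * exp (b * y) ≤ exp ((b + (s' - b)) * y) / ((s' - b) * exp 1) :=
      zbAux1 b (s' - b) y hy (by linarith)
    have h3 : (0:ℝ) ≤ 1 / (a * exp 1) := by positivity
    have h4 : b + (s' - b) = s' := by ring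
    rw [h4] at h2
    linarith
  · have he : |exp (x * y) * y| = (-y) * exp (x * y) := by
      rw [abs_of_nonpos (mul_nonpos_of_nonneg_of_nonpos (exp_pos _).le hy.le)]; ring
    rw [he]
    have h1 : (-y) * exp (x * y) ≤ (-y) * exp (a * y) := by
      apply mul_le_mul_of_nonneg_left (exp_le_exp.2 ?_) (by linarith)
      nlinarith
    have h2 := zbAux2 a y ha hy.le
    have h3 : (0:ℝ) ≤ exp (s' * y) / ((s' - b) * exp 1) :=
      div_nonneg (exp_pos _).le (by nlinarith [exp_pos (1:ℝ)])
    linarith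

lemma zbDeriv {Ω : Type*} [MeasurableSpace Ω] (μ : Measure Ω) [IsProbabilityMeasure μ]
    (Y : Ω → ℝ) (hY : Measurable Y) (c : ℝ) (hc : 0 < c)
    (hmgf : ∀ s ∈ Set.Ico (0:ℝ) (1/c), Integrable (fun ω => exp (s * Y ω)) μ)
    {s : ℝ} (hs0 : 0 < s) (hs1 : s < 1/c) :
    Integrable (fun ω => exp (s * Y ω) * Y ω) μ ∧
    HasDerivAt (fun t => ∫ ω, exp (t * Y ω) ∂μ) (∫ ω, exp (s * Y ω) * Y ω ∂μ) s := by
  set s' := (s + 1/c)/2 with hs'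
  have hss' : s < s' := by rw [hs']; linarith
  have hs'c : s' < 1/c := by rw [hs']; linarith
  have hs'0 : 0 ≤ s' := by rw [hs']; positivity
  set ε := min (s/2) ((s' - s)/2) with hε
  have hεa : ε ≤ s/2 := min_le_left _ _
  have hεb : ε ≤ (s'-s)/2 := min_le_right _ _
  have hεpos : 0 < ε := lt_min (by linarith) (by linarith)
  have ha : 0 < s - ε := by linarith
  have hb : s + ε < s' := by linarith
  exact hasDerivAt_integral_of_dominated_loc_of_deriv_le (μ := μ) (x₀ := s)
    (F := fun x ω => exp (x * Y ω)) (F' := fun x ω => exp (x * Y ω) * Y ω)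
    (bound := fun ω => exp (s' * Y ω) / ((s' - (s + ε)) * exp 1) + 1 / ((s - ε) * exp 1))
    (Metric.ball_mem_nhds s hεpos)
    (Eventually.of_forall fun x =>
      (measurable_exp.comp (hY.const_mul x)).aestronglyMeasurable)
    (hmgf s ⟨hs0.le, hs1⟩)
    (((measurable_exp.comp (hY.const_mul s)).mul hY).aestronglyMeasurable)
    (ae_of_all _ fun ω x hx => by
      rw [Real.norm_eq_abs]
      rw [Metric.mem_ball, Real.dist_eq, abs_lt] at hx
      exact zbAux_bound x (Y ω) ha (by linarith [hx.1]) (by linarith [hx.2]) hb)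
    (((hmgf s' ⟨hs'0, hs'c⟩).div_const _).add (integrable_const _))
    (ae_of_all _ fun ω x hx => (hasDerivAt_mul_const (Y ω)).exp)

/-- `Ystar` has the `Y`-zero biased distribution with respect to variance `σ2`:
`E[Y f(Y)] = σ2 * E[f'(Ystar)]` for every (absolutely continuous) differentiable
function `f` with derivative `f'` for which both expectations exist. -/
def ZeroBiased {Ω : Type*} [MeasurableSpace Ω] (μ : Measure Ω)
    (Y Ystar : Ω → ℝ) (σ2 : ℝ) : Prop :=
  ∀ f f' : ℝ → ℝ, (∀ x, HasDerivAt f (f' x) x) →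
    Integrable (fun ω => Y ω * f (Y ω)) μ →
    Integrable (fun ω => f' (Ystar ω)) μ →
    ∫ ω, Y ω * f (Y ω) ∂μ = σ2 * ∫ ω, f' (Ystar ω) ∂μ

theorem zero_bias_mgf_bound
    {Ω : Type*} [MeasurableSpace Ω] (μ : Measure Ω) [IsProbabilityMeasure μ]
    (Y Ystar : Ω → ℝ) (hY : Measurable Y) (hYstar : Measurable Ystar)
    (σ2 : ℝ) (hσ2 : 0 < σ2)
    (hmean : ∫ ω, Y ω ∂μ = 0) (hL2 : MemLp Y 2 μ) (hvar : variance Y μ = σ2)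
    (hzb : ZeroBiased μ Y Ystar σ2)
    (c : ℝ) (hc : 0 < c)
    (hbdd : ∀ᵐ ω ∂μ, Ystar ω - Y ω ≤ c)
    (hmgf : ∀ s ∈ Set.Ico (0 : ℝ) (1 / c), Integrable (fun ω => exp (s * Y ω)) μ) :
    ∀ θ ∈ Set.Ioo (0 : ℝ) (1 / c),
      ∫ ω, exp (θ * Y ω) ∂μ ≤ exp (σ2 * θ ^ 2 / (2 * (1 - θ * c))) := by
  intro θ hθ
  obtain ⟨hθ0, hθc⟩ := hθ
  have hθc1 : θ * c < 1 := by
    have := (lt_div_iff₀ hc).mp hθc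
    linarith
  have hD : 0 < 1 - θ * c := by linarith
  set m : ℝ → ℝ := fun s => ∫ ω, exp (s * Y ω) ∂μ with hm
  -- positivity of m
  have hmpos : ∀ s ∈ Set.Ico (0:ℝ) (1/c), 0 < m s := by
    intro s hs
    have := mgf_pos (X := Y) (μ := μ) (t := s) (hmgf s hs)
    simpa [mgf, hm] using this
  -- m 0 = 1
  have hm0 : m 0 = 1 := by simp [hm]
  -- key differential inequality
  have hkey : ∀ s, 0 < s → s < θ →
      ∫ ω, exp (s * Y ω) * Y ω ∂μ ≤ σ2 * s / (1 - θ * c) * m s := by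
    intro s hs0 hsθ
    have hs1 : s < 1/c := hsθ.trans hθc
    have hintY : Integrable (fun ω => Y ω * exp (s * Y ω)) μ :=
      (zbDeriv μ Y hY c hc hmgf hs0 hs1).1.congr (ae_of_all _ fun ω => mul_comm _ _)
    have hstar0 : Integrable (fun ω => exp (s * Ystar ω)) μ := by
      refine ((hmgf s ⟨hs0.le, hs1⟩).const_mul (exp (s * c))).mono'
        ((measurable_exp.comp (hYstar.const_mul s)).aestronglyMeasurable) ?_
      filter_upwards [hbdd] with ω hω
      rw [Real.norm_eq_abs, abs_of_nonneg (exp_pos _).le]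
      have h1 : s * Ystar ω ≤ s * c + s * Y ω := by nlinarith
      calc exp (s * Ystar ω) ≤ exp (s * c + s * Y ω) := exp_le_exp.2 h1
        _ = exp (s * c) * exp (s * Y ω) := exp_add _ _
    have hf : ∀ x : ℝ, HasDerivAt (fun x => exp (s * x)) (exp (s * x) * s) x := fun x => by
      simpa using ((hasDerivAt_id x).const_mul s).exp
    have heq := hzb (fun x => exp (s * x)) (fun x => exp (s * x) * s) hf hintY
      (hstar0.mul_const s)
    have hb1 : ∫ ω, exp (s * Ystar ω) ∂μ ≤ ∫ ω, exp (s * c) * exp (s * Y ω) ∂μ := by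
      refine integral_mono_ae hstar0 ((hmgf s ⟨hs0.le, hs1⟩).const_mul _) ?_
      filter_upwards [hbdd] with ω hω
      have h1 : s * Ystar ω ≤ s * c + s * Y ω := by nlinarith
      calc exp (s * Ystar ω) ≤ exp (s * c + s * Y ω) := exp_le_exp.2 h1
        _ = exp (s * c) * exp (s * Y ω) := exp_add _ _
    rw [integral_const_mul] at hb1
    -- exp (s*c) ≤ 1/(1 - θ*c)
    have hec : exp (s * c) ≤ 1 / (1 - θ * c) := by
      rw [le_div_iff₀ hD]
      have h1 := Real.add_one_le_exp (-(s * c))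
      have h2 : exp (-(s * c)) * exp (s * c) = 1 := by rw [← exp_add]; simp
      have hsc : s * c < θ * c := by nlinarith
      nlinarith [exp_pos (s * c), exp_pos (-(s * c))]
    have hint2 : ∫ ω, exp (s * Y ω) * Y ω ∂μ = ∫ ω, Y ω * exp (s * Y ω) ∂μ := by
      congr 1; ext ω; ring
    rw [hint2, heq, integral_mul_const]
    have hstarpos : 0 ≤ ∫ ω, exp (s * Ystar ω) ∂μ :=
      integral_nonneg fun ω => (exp_pos _).le
    have hmnn : 0 ≤ m s := (hmpos s ⟨hs0.le, hs1⟩).le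
    calc σ2 * ((∫ ω, exp (s * Ystar ω) ∂μ) * s) ≤ σ2 * ((exp (s * c) * m s) * s) := by
          apply mul_le_mul_of_nonneg_left _ hσ2.le
          exact mul_le_mul_of_nonneg_right hb1 hs0.le
      _ ≤ σ2 * ((1 / (1 - θ * c) * m s) * s) := by
          apply mul_le_mul_of_nonneg_left _ hσ2.le
          exact mul_le_mul_of_nonneg_right (mul_le_mul_of_nonneg_right hec hmnn) hs0.le
      _ = σ2 * s / (1 - θ * c) * m s := by ring
  -- the comparison function is antitone on [0, θ]
  have hcont : ContinuousOn m (Set.Icc 0 θ) := by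
    refine continuousOn_of_dominated (bound := fun ω => exp (θ * Y ω) + 1)
      (fun x _ => (measurable_exp.comp (hY.const_mul x)).aestronglyMeasurable)
      (fun x hx => ae_of_all _ fun ω => ?_)
      ((hmgf θ ⟨hθ0.le, hθc⟩).add (integrable_const 1))
      (ae_of_all _ fun ω => ?_)
    · rw [Real.norm_eq_abs, abs_of_nonneg (exp_pos _).le]
      show exp (x * Y ω) ≤ exp (θ * Y ω) + 1
      rcases le_or_gt 0 (Y ω) with hy | hy
      · have : x * Y ω ≤ θ * Y ω := mul_le_mul_of_nonneg_right hx.2 hy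
        have := exp_le_exp.2 this
        linarith [exp_pos (θ * Y ω)]
      · have h1 : x * Y ω ≤ 0 := mul_nonpos_of_nonneg_of_nonpos hx.1 hy.le
        have h2 : exp (x * Y ω) ≤ 1 := by
          calc exp (x * Y ω) ≤ exp 0 := exp_le_exp.2 h1
            _ = 1 := exp_zero
        linarith [exp_pos (θ * Y ω)]
    · exact (Continuous.comp continuous_exp (continuous_id.mul continuous_const)).continuousOn
  have hdiffh : ∀ s ∈ Set.Ioo 0 θ,
      HasDerivAt (fun s => Real.log (m s) - σ2 * s ^ 2 / (2 * (1 - θ * c)))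
        ((∫ ω, exp (s * Y ω) * Y ω ∂μ) / m s - σ2 * (2 * s ^ 1) / (2 * (1 - θ * c))) s := by
    intro s hs
    have h1 := (zbDeriv μ Y hY c hc hmgf hs.1 (hs.2.trans hθc)).2
    have h2 : HasDerivAt (fun s => Real.log (m s))
        ((∫ ω, exp (s * Y ω) * Y ω ∂μ) / m s) s :=
      h1.log (hmpos s ⟨hs.1.le, hs.2.trans hθc⟩).ne'
    exact h2.sub (((hasDerivAt_pow 2 s).const_mul σ2).div_const _)
  have hanti : AntitoneOn (fun s => Real.log (m s) - σ2 * s ^ 2 / (2 * (1 - θ * c)))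
      (Set.Icc 0 θ) := by
    apply antitoneOn_of_deriv_nonpos (convex_Icc 0 θ)
    · exact (hcont.log fun s hs =>
        (hmpos s ⟨hs.1, lt_of_le_of_lt hs.2 hθc⟩).ne').sub
        (Continuous.continuousOn (by continuity))
    · rw [interior_Icc]
      exact fun s hs => (hdiffh s hs).differentiableAt.differentiableWithinAt
    · intro s hs
      rw [interior_Icc] at hs
      rw [(hdiffh s hs).deriv]
      have hk := hkey s hs.1 hs.2
      have hms := hmpos s ⟨hs.1.le, hs.2.trans hθc⟩
      have h1 : (∫ ω, exp (s * Y ω) * Y ω ∂μ) / m s ≤ σ2 * s / (1 - θ * c) := by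
        rw [div_le_iff₀ hms]
        exact hk
      have h2 : σ2 * (2 * s ^ 1) / (2 * (1 - θ * c)) = σ2 * s / (1 - θ * c) := by
        rw [pow_one]; field_simp
      rw [h2]
      linarith
  have hθmem : θ ∈ Set.Icc (0:ℝ) θ := Set.right_mem_Icc.2 hθ0.le
  have h0mem : (0:ℝ) ∈ Set.Icc (0:ℝ) θ := Set.left_mem_Icc.2 hθ0.le
  have hfin := hanti h0mem hθmem hθ0.le
  simp only [hm0, Real.log_one] at hfin
  have hlog : Real.log (m θ) ≤ σ2 * θ ^ 2 / (2 * (1 - θ * c)) := by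
    have : (0:ℝ) ^ 2 = 0 := by norm_num
    rw [this] at hfin
    simp at hfin
    linarith
  have hmθ := hmpos θ ⟨hθ0.le, hθc⟩
  exact (Real.log_le_iff_le_exp hmθ).1 hlog
end

section
/- Let Y be a mean zero random variable with variance σ² ∈ (0,∞), and let Y* be defined on the same probability space and have the Y-zero biased distribution. Suppose Y* − Y ≤ c almost surely for some constant c > 0, and let θ > 0 be such that E[exp(sY)] is finite for all s ∈ [0, θ]. Then E[exp(θY)] ≤ exp((σ²/c²)(e^{cθ}(cθ − 1) + 1)). -/
open MeasureTheory ProbabilityTheory Real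

private lemma abs_mul_exp_bound' {θ a b x y : ℝ} (ha : 0 < a) (hb : b < θ)
    (hax : a ≤ x) (hxb : x ≤ b) :
    |y * Real.exp (x * y)| ≤ (θ - b)⁻¹ * Real.exp (θ * y) + a⁻¹ := by
  have hd : 0 < θ - b := by linarith
  rw [abs_mul, Real.abs_exp]
  rcases le_or_gt 0 y with hy | hy
  · have h1 : Real.exp (x * y) ≤ Real.exp (b * y) := by
      apply Real.exp_le_exp.2; nlinarith
    have h2 : (θ - b) * y ≤ Real.exp ((θ - b) * y) := by
      linarith [Real.add_one_le_exp ((θ - b) * y)]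
    have h3 : (θ - b) * (|y| * Real.exp (x * y)) ≤ Real.exp (θ * y) := by
      rw [abs_of_nonneg hy]
      calc (θ - b) * (y * Real.exp (x * y)) ≤ ((θ - b) * y) * Real.exp (b * y) := by
            nlinarith [mul_le_mul_of_nonneg_left h1 (mul_nonneg hd.le hy)]
        _ ≤ Real.exp ((θ - b) * y) * Real.exp (b * y) := by
            nlinarith [Real.exp_pos (b * y)]
        _ = Real.exp (θ * y) := by rw [← Real.exp_add]; ring_nf
    have h4 := (le_div_iff₀' hd).2 h3
    rw [div_eq_inv_mul] at h4
    have ha' : (0:ℝ) ≤ a⁻¹ := by positivity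
    linarith
  · have h1 : Real.exp (x * y) ≤ Real.exp (a * y) := by
      apply Real.exp_le_exp.2; nlinarith
    have h2 : a * |y| ≤ Real.exp (a * |y|) := by
      linarith [Real.add_one_le_exp (a * |y|)]
    have hay : a * y = -(a * |y|) := by rw [abs_of_neg hy]; ring
    have h3 : a * (|y| * Real.exp (a * y)) ≤ 1 := by
      calc a * (|y| * Real.exp (a * y)) = (a * |y|) * Real.exp (a * y) := by ring
        _ ≤ Real.exp (a * |y|) * Real.exp (a * y) := by
            nlinarith [Real.exp_pos (a * y)]
        _ = 1 := by rw [← Real.exp_add, hay]; simp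
    have h4 : |y| * Real.exp (a * y) ≤ a⁻¹ := by
      have := (le_div_iff₀' ha).2 h3
      rwa [one_div] at this
    have h5 : |y| * Real.exp (x * y) ≤ |y| * Real.exp (a * y) :=
      mul_le_mul_of_nonneg_left h1 (abs_nonneg y)
    have hp : (0:ℝ) ≤ (θ - b)⁻¹ * Real.exp (θ * y) := by positivity
    linarith

private lemma hasDerivAt_integral_exp' {Ω : Type*} [MeasurableSpace Ω] (μ : Measure Ω)
    [IsProbabilityMeasure μ]
    (Y : Ω → ℝ) (hY : Measurable Y) {θ s : ℝ} (hs0 : 0 < s) (hsθ : s < θ)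
    (hintθ : Integrable (fun ω => exp (θ * Y ω)) μ)
    (hints : Integrable (fun ω => exp (s * Y ω)) μ) :
    Integrable (fun ω => Y ω * exp (s * Y ω)) μ ∧
      HasDerivAt (fun t => ∫ ω, exp (t * Y ω) ∂μ)
        (∫ ω, Y ω * exp (s * Y ω) ∂μ) s := by
  set a : ℝ := s / 2 with ha_def
  set b : ℝ := (s + θ) / 2 with hb_def
  have ha : 0 < a := by positivity
  have hb : b < θ := by rw [hb_def]; linarith
  set ε : ℝ := min (s / 2) ((θ - s) / 2) with hε_def
  have hε : 0 < ε := lt_min (by positivity) (by linarith)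
  have hball : ∀ x ∈ Metric.ball s ε, a ≤ x ∧ x ≤ b := by
    intro x hx
    rw [Metric.mem_ball, Real.dist_eq] at hx
    have h1 := abs_lt.1 hx
    constructor
    · have := min_le_left (s / 2) ((θ - s) / 2); rw [ha_def]; linarith [h1.1]
    · have := min_le_right (s / 2) ((θ - s) / 2); rw [hb_def]; linarith [h1.2]
  exact hasDerivAt_integral_of_dominated_loc_of_deriv_le (μ := μ)
    (F := fun t ω => exp (t * Y ω)) (F' := fun t ω => Y ω * exp (t * Y ω))
    (bound := fun ω => (θ - b)⁻¹ * exp (θ * Y ω) + a⁻¹) (Metric.ball_mem_nhds s hε)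
    (Filter.Eventually.of_forall fun x => ((hY.const_mul x).exp).aestronglyMeasurable)
    hints
    ((hY.mul ((hY.const_mul s).exp)).aestronglyMeasurable)
    (Filter.Eventually.of_forall fun ω x hx => by
      rw [Real.norm_eq_abs]
      exact abs_mul_exp_bound' ha hb (hball x hx).1 (hball x hx).2)
    ((hintθ.const_mul _).add (integrable_const _))
    (Filter.Eventually.of_forall fun ω x _ => by
      have h := (hasDerivAt_mul_const (Y ω) (x := x)).exp
      rwa [mul_comm (exp (x * Y ω))] at h)

private lemma exp_le_one_add_exp {θ s y : ℝ} (h0 : 0 ≤ s) (hθ : s ≤ θ) :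
    Real.exp (s * y) ≤ 1 + Real.exp (θ * y) := by
  rcases le_or_gt 0 y with hy | hy
  · have h : Real.exp (s * y) ≤ Real.exp (θ * y) := Real.exp_le_exp.2 (by nlinarith)
    linarith
  · have h : Real.exp (s * y) ≤ 1 := Real.exp_le_one_iff.2 (by nlinarith)
    linarith [Real.exp_pos (θ * y)]

private lemma continuousOn_integral_exp' {Ω : Type*} [MeasurableSpace Ω] (μ : Measure Ω)
    [IsProbabilityMeasure μ]
    (Y : Ω → ℝ) (hY : Measurable Y) {θ : ℝ}
    (hintθ : Integrable (fun ω => exp (θ * Y ω)) μ) :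
    ContinuousOn (fun t => ∫ ω, exp (t * Y ω) ∂μ) (Set.Icc 0 θ) := by
  intro s₀ _
  refine tendsto_integral_filter_of_dominated_convergence
    (fun ω => 1 + exp (θ * Y ω))
    (Filter.Eventually.of_forall fun s => ((hY.const_mul s).exp).aestronglyMeasurable)
    ?_ ((integrable_const 1).add hintθ) ?_
  · filter_upwards [self_mem_nhdsWithin] with s hs
    filter_upwards with ω
    rw [Real.norm_eq_abs, Real.abs_exp]
    exact exp_le_one_add_exp hs.1 hs.2
  · filter_upwards with ω
    exact ((Real.continuous_exp.comp (continuous_id.mul continuous_const)).tendsto s₀).mono_left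
      nhdsWithin_le_nhds

theorem zero_bias_mgf_bound_bennett
    {Ω : Type*} [MeasurableSpace Ω] (μ : Measure Ω) [IsProbabilityMeasure μ]
    (Y Ystar : Ω → ℝ) (hY : Measurable Y) (hYstar : Measurable Ystar)
    (σ2 : ℝ) (hσ2 : 0 < σ2)
    (hmean : ∫ ω, Y ω ∂μ = 0) (hL2 : MemLp Y 2 μ) (hvar : variance Y μ = σ2)
    (hzb : ZeroBiased μ Y Ystar σ2)
    (c : ℝ) (hc : 0 < c)
    (hbdd : ∀ᵐ ω ∂μ, Ystar ω - Y ω ≤ c)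
    (θ : ℝ) (hθ : 0 < θ)
    (hmgf : ∀ s ∈ Set.Icc (0 : ℝ) θ, Integrable (fun ω => exp (s * Y ω)) μ) :
    ∫ ω, exp (θ * Y ω) ∂μ ≤
      exp (σ2 / c ^ 2 * (Real.exp (c * θ) * (c * θ - 1) + 1)) := by
  set M : ℝ → ℝ := fun t => ∫ ω, exp (t * Y ω) ∂μ with hM_def
  have hintθ : Integrable (fun ω => exp (θ * Y ω)) μ :=
    hmgf θ ⟨hθ.le, le_refl θ⟩
  have hMpos : ∀ s ∈ Set.Icc (0:ℝ) θ, 0 < M s := by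
    intro s hs
    have h := ProbabilityTheory.mgf_pos (μ := μ) (X := Y) (t := s) (hmgf s hs)
    simp only [ProbabilityTheory.mgf] at h
    exact h
  have hMcont : ContinuousOn M (Set.Icc 0 θ) :=
    continuousOn_integral_exp' μ Y hY hintθ
  -- the auxiliary function g
  set φ : ℝ → ℝ := fun t => σ2 / c ^ 2 * (exp (c * t) * (c * t - 1) + 1) with hφ_def
  set g : ℝ → ℝ := fun t => Real.log (M t) - φ t with hg_def
  -- derivative bound at interior points
  have hg_deriv : ∀ s ∈ Set.Ioo (0:ℝ) θ,
      HasDerivAt g ((∫ ω, Y ω * exp (s * Y ω) ∂μ) / M s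
        - σ2 / c ^ 2 * (exp (c * s) * c * (c * s - 1) + exp (c * s) * c)) s := by
    intro s hs
    obtain ⟨hintD, hderiv⟩ := hasDerivAt_integral_exp' μ Y hY hs.1 hs.2 hintθ
      (hmgf s ⟨hs.1.le, hs.2.le⟩)
    have hlog : HasDerivAt (fun t => Real.log (M t))
        ((∫ ω, Y ω * exp (s * Y ω) ∂μ) / M s) s :=
      hderiv.log (hMpos s ⟨hs.1.le, hs.2.le⟩).ne'
    have h1 : HasDerivAt (fun t : ℝ => c * t) c s := by
      simpa using (hasDerivAt_id s).const_mul c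
    have h2 : HasDerivAt (fun t : ℝ => exp (c * t)) (exp (c * s) * c) s := h1.exp
    have h3 : HasDerivAt (fun t : ℝ => c * t - 1) c s := h1.sub_const 1
    have h4 : HasDerivAt (fun t : ℝ => exp (c * t) * (c * t - 1))
        (exp (c * s) * c * (c * s - 1) + exp (c * s) * c) s := h2.mul h3
    have h5 := (h4.add_const 1).const_mul (σ2 / c ^ 2)
    exact hlog.sub h5
  -- the key inequality for the derivative
  have hDle : ∀ s ∈ Set.Ioo (0:ℝ) θ,
      (∫ ω, Y ω * exp (s * Y ω) ∂μ) ≤ σ2 * s * (exp (s * c) * M s) := by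
    intro s hs
    obtain ⟨hintD, _⟩ := hasDerivAt_integral_exp' μ Y hY hs.1 hs.2 hintθ
      (hmgf s ⟨hs.1.le, hs.2.le⟩)
    have hints : Integrable (fun ω => exp (s * Y ω)) μ := hmgf s ⟨hs.1.le, hs.2.le⟩
    have hintstar : Integrable (fun ω => exp (s * Ystar ω)) μ := by
      refine Integrable.mono' ((hints.const_mul (exp (s * c)))) 
        ((hYstar.const_mul s).exp).aestronglyMeasurable ?_
      filter_upwards [hbdd] with ω hω
      rw [Real.norm_eq_abs, Real.abs_exp]
      rw [← Real.exp_add]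
      exact Real.exp_le_exp.2 (by nlinarith [hs.1])
    have hintstar' : Integrable (fun ω => exp (s * Ystar ω) * s) μ :=
      hintstar.mul_const s
    have hf : ∀ x : ℝ, HasDerivAt (fun x => exp (s * x)) (exp (s * x) * s) x := by
      intro x
      have h1 : HasDerivAt (fun x : ℝ => s * x) s x := by
        simpa using (hasDerivAt_id x).const_mul s
      exact h1.exp
    have heq := hzb (fun x => exp (s * x)) (fun x => exp (s * x) * s) hf hintD hintstar'
    have hpull : ∫ ω, exp (s * Ystar ω) * s ∂μ = (∫ ω, exp (s * Ystar ω) ∂μ) * s :=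
      integral_mul_const s _
    have hstar_le : ∫ ω, exp (s * Ystar ω) ∂μ ≤ exp (s * c) * M s := by
      rw [hM_def, ← integral_const_mul]
      refine integral_mono_ae hintstar (hints.const_mul (exp (s * c))) ?_
      filter_upwards [hbdd] with ω hω
      rw [← Real.exp_add]
      exact Real.exp_le_exp.2 (by nlinarith [hs.1])
    calc (∫ ω, Y ω * exp (s * Y ω) ∂μ)
        = σ2 * ((∫ ω, exp (s * Ystar ω) ∂μ) * s) := by rw [heq, hpull]
      _ ≤ σ2 * ((exp (s * c) * M s) * s) := by
          apply mul_le_mul_of_nonneg_left _ hσ2.le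
          exact mul_le_mul_of_nonneg_right hstar_le hs.1.le
      _ = σ2 * s * (exp (s * c) * M s) := by ring
  -- deriv g ≤ 0 on the interior
  have hg_nonpos : ∀ s ∈ Set.Ioo (0:ℝ) θ, deriv g s ≤ 0 := by
    intro s hs
    rw [(hg_deriv s hs).deriv]
    have hMs : 0 < M s := hMpos s ⟨hs.1.le, hs.2.le⟩
    have hD := hDle s hs
    have h1 : (∫ ω, Y ω * exp (s * Y ω) ∂μ) / M s ≤ σ2 * s * exp (s * c) :=
      (div_le_iff₀ hMs).2 (by nlinarith)
    have h2 : σ2 / c ^ 2 * (exp (c * s) * c * (c * s - 1) + exp (c * s) * c)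
        = σ2 * s * exp (s * c) := by
      rw [mul_comm s c]
      field_simp
      ring
    linarith
  have hg_cont : ContinuousOn g (Set.Icc 0 θ) := by
    apply ContinuousOn.sub
    · exact hMcont.log fun s hs => (hMpos s hs).ne'
    · refine Continuous.continuousOn ?_
      exact continuous_const.mul (((Real.continuous_exp.comp
        (continuous_const.mul continuous_id)).mul
        ((continuous_const.mul continuous_id).sub continuous_const)).add continuous_const)
  have hg_diff : DifferentiableOn ℝ g (interior (Set.Icc (0:ℝ) θ)) := by
    rw [interior_Icc]
    exact fun s hs => ((hg_deriv s hs).differentiableAt).differentiableWithinAt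
  have hanti : AntitoneOn g (Set.Icc 0 θ) := by
    apply antitoneOn_of_deriv_nonpos (convex_Icc 0 θ) hg_cont hg_diff
    rw [interior_Icc]; exact hg_nonpos
  have hg0 : g 0 = 0 := by
    have hM0 : M 0 = 1 := by
      rw [hM_def]
      simp
    rw [hg_def, hφ_def]
    simp [hM0]
  have hgθ : g θ ≤ 0 := by
    rw [← hg0]
    exact hanti (Set.left_mem_Icc.2 hθ.le) (Set.right_mem_Icc.2 hθ.le) hθ.le
  have hlogM : Real.log (M θ) ≤ σ2 / c ^ 2 * (exp (c * θ) * (c * θ - 1) + 1) := by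
    rw [hg_def, hφ_def] at hgθ
    simpa using hgθ
  calc (∫ ω, exp (θ * Y ω) ∂μ) = M θ := rfl
    _ ≤ exp (σ2 / c ^ 2 * (exp (c * θ) * (c * θ - 1) + 1)) :=
        (Real.log_le_iff_le_exp (hMpos θ ⟨hθ.le, le_refl θ⟩)).1 hlogM
end
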